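/- arXiv:2005.03219 — 5 statements merged into one kernel-verified Lean document; each statement's English description precedes it below -/
import Mathlib

section
/- Let X and X̂ be random variables on a probability space with values in ℝ^d, each admitting a bounded density with respect to Lebesgue measure. Let E be a Borel set such that the indicator 1_E has bounded variation in ℝ^d. Then for all p, q ∈ (0,∞), E[|1_E(X) − 1_E(X̂)|^q] ≤ ((2K₀)^p + A₁(‖p_X‖_∞ + ‖p_X̂‖_∞) |D1_E|(ℝ^d)) · (E[|X − X̂|^p])^{1/(p+1)}, where K₀ is the constant in the pointwise maximal-function estimate for BV functions and A₁ is the constant in the Hardy–Littlewood weak (1,1) maximal inequality. -/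
open MeasureTheory Metric Filter Set
open scoped ENNReal Topology

noncomputable section

abbrev Euc (d : ℕ) := EuclideanSpace ℝ (Fin d)

/-- Hardy--Littlewood maximal function of a measure. -/
def maximal {d : ℕ} (ν : Measure (Euc d)) (x : Euc d) : ℝ≥0∞ :=
  ⨆ (s : ℝ) (_ : 0 < s), ν (closedBall x s) / volume (closedBall x s)

/-- Restricted Hardy--Littlewood maximal function of a measure. -/
def maximalR {d : ℕ} (R : ℝ) (ν : Measure (Euc d)) (x : Euc d) : ℝ≥0∞ :=
  ⨆ (s : ℝ) (_ : s ∈ Set.Ioc 0 R), ν (closedBall x s) / volume (closedBall x s)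

lemma lowerSemicontinuous_maximal {d : ℕ} (ν : Measure (Euc d)) :
    LowerSemicontinuous (maximal ν) := by
  intro x c hc
  rw [maximal, gt_iff_lt, lt_iSup_iff] at hc
  obtain ⟨s, hc⟩ := hc
  rw [lt_iSup_iff] at hc
  obtain ⟨hs, hc⟩ := hc
  set n := Module.finrank ℝ (Euc d) with hn
  set B := volume (closedBall (0:Euc d) 1) with hB
  have hvol : ∀ (y : Euc d) (r : ℝ), 0 ≤ r →
      volume (closedBall y r) = ENNReal.ofReal (r ^ n) * B :=
    fun y r hr => Measure.addHaar_closedBall' volume y hr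
  set a := ν (closedBall x s) with ha
  have hc' : c < a / (ENNReal.ofReal (s ^ n) * B) := by
    rwa [hvol x s hs.le] at hc
  have htend : Tendsto (fun h : ℝ => a / (ENNReal.ofReal ((s + h) ^ n) * B)) (𝓝[>] (0:ℝ))
      (𝓝 (a / (ENNReal.ofReal (s ^ n) * B))) := by
    apply ENNReal.Tendsto.const_div
    · apply ENNReal.Tendsto.mul_const
      · have : Tendsto (fun h : ℝ => ENNReal.ofReal ((s + h) ^ n)) (𝓝 (0:ℝ))
            (𝓝 (ENNReal.ofReal ((s + 0) ^ n))) :=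
          (ENNReal.continuous_ofReal.comp ((continuous_const.add continuous_id).pow n)).tendsto 0
        simpa using this.mono_left nhdsWithin_le_nhds
      · exact Or.inr measure_closedBall_lt_top.ne
    · exact Or.inl (ENNReal.mul_ne_top ENNReal.ofReal_ne_top measure_closedBall_lt_top.ne)
  have hev : ∀ᶠ h in 𝓝[>] (0:ℝ), c < a / (ENNReal.ofReal ((s + h) ^ n) * B) :=
    htend.eventually (eventually_gt_nhds hc')
  obtain ⟨h, hch, hh0⟩ := (hev.and self_mem_nhdsWithin).exists
  filter_upwards [Metric.ball_mem_nhds x hh0] with y hy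
  have hsub : closedBall x s ⊆ closedBall y (s + h) := fun z hz => by
    rw [mem_closedBall] at hz ⊢
    calc dist z y ≤ dist z x + dist x y := dist_triangle z x y
    _ ≤ s + h := add_le_add hz (by rw [dist_comm]; exact (mem_ball.1 hy).le)
  calc c < a / (ENNReal.ofReal ((s + h) ^ n) * B) := hch
  _ ≤ ν (closedBall y (s + h)) / (ENNReal.ofReal ((s + h) ^ n) * B) :=
      ENNReal.div_le_div_right (measure_mono hsub) _
  _ = ν (closedBall y (s + h)) / volume (closedBall y (s + h)) := by
      rw [hvol y (s + h) (by positivity)]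
  _ ≤ maximal ν y := by
      rw [maximal]
      refine le_iSup_of_le (s + h) ?_
      exact le_iSup_of_le (by positivity) le_rfl

def QQ {d : ℕ} (K₀ : ℝ) (f : Euc d → ℝ) (Mx : Euc d → ℝ≥0∞) (x y : Euc d) : Prop :=
  ENNReal.ofReal |f x - f y| ≤ ENNReal.ofReal (K₀ * dist x y) * (Mx x + Mx y)

lemma QQ_symm {d : ℕ} {K₀ : ℝ} {f : Euc d → ℝ} {Mx : Euc d → ℝ≥0∞} {x y : Euc d}
    (h : QQ K₀ f Mx x y) : QQ K₀ f Mx y x := by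
  unfold QQ at *
  rwa [abs_sub_comm, dist_comm, add_comm]

lemma measurableSet_QQ {d : ℕ} {K₀ : ℝ} {f : Euc d → ℝ} {Mx : Euc d → ℝ≥0∞}
    (hf : Measurable f) (hM : Measurable Mx) :
    MeasurableSet {w : Euc d × Euc d | QQ K₀ f Mx w.1 w.2} := by
  unfold QQ
  exact measurableSet_le
    ((((hf.comp measurable_fst).sub (hf.comp measurable_snd)).abs).ennreal_ofReal)
    (((measurable_const.mul (measurable_fst.dist measurable_snd)).ennreal_ofReal).mul
      ((hM.comp measurable_fst).add (hM.comp measurable_snd)))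

lemma maximal_lower {d : ℕ} {K₀ : ℝ} {f : Euc d → ℝ} {Mx : Euc d → ℝ≥0∞}
    (hK₀ : 0 < K₀) (hf01 : ∀ x, f x = 0 ∨ f x = 1) {x y : Euc d} {r c : ℝ}
    (hr : 0 ≤ r) (hc : r < c) (hdxy : dist x y ≤ r)
    (hQ : QQ K₀ f Mx x y) (hne : f x ≠ f y) :
    ENNReal.ofReal (1/(2*K₀*c)) < Mx x ∨ ENNReal.ofReal (1/(2*K₀*c)) < Mx y := by
  have hc0 : 0 < c := lt_of_le_of_lt hr hc
  by_contra hcon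
  push_neg at hcon
  obtain ⟨h1, h2⟩ := hcon
  have habs : |f x - f y| = 1 := by
    rcases hf01 x with h | h <;> rcases hf01 y with g | g <;>
      simp_all
  have hstep : (1:ℝ≥0∞) ≤ ENNReal.ofReal (K₀ * dist x y) * (Mx x + Mx y) := by
    calc (1:ℝ≥0∞) = ENNReal.ofReal |f x - f y| := by rw [habs, ENNReal.ofReal_one]
    _ ≤ _ := hQ
  have hbound : ENNReal.ofReal (K₀ * dist x y) * (Mx x + Mx y) ≤ ENNReal.ofReal (r / c) := by
    calc ENNReal.ofReal (K₀ * dist x y) * (Mx x + Mx y)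
        ≤ ENNReal.ofReal (K₀ * r) * (ENNReal.ofReal (1/(2*K₀*c)) + ENNReal.ofReal (1/(2*K₀*c))) :=
          mul_le_mul' (ENNReal.ofReal_le_ofReal (mul_le_mul_of_nonneg_left hdxy hK₀.le))
            (add_le_add h1 h2)
    _ = ENNReal.ofReal ((K₀ * r) * (1/(2*K₀*c) + 1/(2*K₀*c))) := by
          rw [← ENNReal.ofReal_add (by positivity) (by positivity),
            ← ENNReal.ofReal_mul (by positivity)]
    _ = ENNReal.ofReal (r / c) := by
          congr 1
          field_simp
          ring
  have hge : (1:ℝ≥0∞) ≤ ENNReal.ofReal (r / c) := hstep.trans hbound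
  have hlt : ENNReal.ofReal (r / c) < 1 :=
    ENNReal.ofReal_lt_one.2 (by rw [div_lt_one hc0]; exact hc)
  exact absurd hge (not_le.2 hlt)

set_option maxHeartbeats 2000000 in
/-- Multi-dimensional Avikainen estimate for indicator functions of sets of finite perimeter
(Lemma 2.15 / "Lem_key_1"). `DE` is the total variation measure `|D 1_E|`, `K₀` the constant
of the pointwise maximal-function estimate for BV functions, `A₁` the constant of the
Hardy–Littlewood weak (1,1) inequality. -/
theorem stmt_0 {d : ℕ} {Ω : Type*} [MeasurableSpace Ω] (P : Measure Ω) [IsProbabilityMeasure P]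
    (X Xh : Ω → Euc d) (hX : Measurable X) (hXh : Measurable Xh)
    (pX pXh : Euc d → ℝ≥0∞)
    (hdX : P.map X = volume.withDensity pX)
    (hdXh : P.map Xh = volume.withDensity pXh)
    (hbX : essSup pX volume ≠ ∞) (hbXh : essSup pXh volume ≠ ∞)
    (E : Set (Euc d)) (hE : MeasurableSet E)
    (DE : Measure (Euc d)) [IsFiniteMeasure DE]
    (K₀ A₁ : ℝ) (hK₀ : 0 < K₀) (hA₁ : 0 < A₁)
    (hpt : ∀ᵐ x ∂(volume : Measure (Euc d)), ∀ᵐ y ∂(volume : Measure (Euc d)),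
      ENNReal.ofReal |E.indicator (fun _ => (1:ℝ)) x - E.indicator (fun _ => (1:ℝ)) y|
        ≤ ENNReal.ofReal (K₀ * dist x y) * (maximal DE x + maximal DE y))
    (hweak : ∀ lam : ℝ≥0∞, lam ≠ 0 →
      volume {x : Euc d | lam < maximal DE x} ≤ ENNReal.ofReal A₁ * DE Set.univ / lam)
    (p q : ℝ) (hp : 0 < p) (hq : 0 < q) :
    ∫⁻ ω, (ENNReal.ofReal
        |E.indicator (fun _ => (1:ℝ)) (X ω) - E.indicator (fun _ => (1:ℝ)) (Xh ω)|) ^ q ∂P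
      ≤ (ENNReal.ofReal ((2 * K₀) ^ p)
          + ENNReal.ofReal A₁ * (essSup pX volume + essSup pXh volume) * DE Set.univ)
        * (∫⁻ ω, edist (X ω) (Xh ω) ^ p ∂P) ^ (1 / (p + 1)) := by
  classical
  set f : Euc d → ℝ := E.indicator (fun _ => (1:ℝ)) with hfdef
  have hfm : Measurable f := measurable_const.indicator hE
  set M : Euc d → ℝ≥0∞ := maximal DE with hMdef
  have hMm : Measurable M := (lowerSemicontinuous_maximal DE).measurable
  set SX := essSup pX volume with hSX
  set SXh := essSup pXh volume with hSXh
  set I := ∫⁻ ω, edist (X ω) (Xh ω) ^ p ∂P with hIdef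
  set Φ : Ω → ℝ≥0∞ := fun ω => ENNReal.ofReal |f (X ω) - f (Xh ω)| with hΦdef
  have hΦm : Measurable Φ := (((hfm.comp hX).sub (hfm.comp hXh)).abs).ennreal_ofReal
  have hf01 : ∀ x : Euc d, f x = 0 ∨ f x = 1 := by
    intro x
    by_cases hx : x ∈ E
    · right; simp [hfdef, Set.indicator_of_mem hx]
    · left; simp [hfdef, Set.indicator_of_notMem hx]
  have habs1 : ∀ x y : Euc d, f x ≠ f y → ENNReal.ofReal |f x - f y| = 1 := by
    intro x y hne
    rcases hf01 x with h | h <;> rcases hf01 y with g | g <;>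
      simp_all
  -- step 0 : remove the power `q`
  have h0 : ∫⁻ ω, Φ ω ^ q ∂P = ∫⁻ ω, Φ ω ∂P := by
    apply lintegral_congr
    intro ω
    rcases eq_or_ne (f (X ω)) (f (Xh ω)) with h | h
    · simp [hΦdef, h, ENNReal.zero_rpow_of_pos hq]
    · rw [show Φ ω = 1 from habs1 _ _ h, ENNReal.one_rpow]
  rw [h0]
  -- degenerate cases
  rcases eq_or_ne I 0 with hI0 | hIne0
  · have hm : Measurable fun ω => edist (X ω) (Xh ω) ^ p := (hX.edist hXh).pow_const p
    have hae : ∀ᵐ ω ∂P, edist (X ω) (Xh ω) ^ p = 0 := by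
      have := (lintegral_eq_zero_iff hm).1 hI0
      filter_upwards [this] with ω hω using hω
    have : ∫⁻ ω, Φ ω ∂P = 0 := by
      rw [lintegral_eq_zero_iff hΦm]
      filter_upwards [hae] with ω hω
      have hxy : X ω = Xh ω := by
        rcases ENNReal.rpow_eq_zero_iff.1 hω with ⟨h1, _⟩ | ⟨_, h2⟩
        · exact edist_eq_zero.1 h1
        · exact absurd h2 (not_lt.2 hp.le)
      simp [hΦdef, hxy]
    rw [this]
    exact zero_le
  rcases eq_or_ne I ⊤ with hItop | hItop
  · have : (ENNReal.ofReal ((2 * K₀) ^ p)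
        + ENNReal.ofReal A₁ * (SX + SXh) * DE Set.univ) * I ^ (1 / (p + 1)) = ⊤ := by
      rw [hItop, ENNReal.top_rpow_of_pos (by positivity), ENNReal.mul_top]
      exact ne_of_gt (lt_of_lt_of_le
        (ENNReal.ofReal_pos.2 (Real.rpow_pos_of_pos (by linarith) p)) le_self_add)
    rw [this]
    exact le_top
  -- main case
  have hJ : I ^ (1 / (p + 1)) ≠ ⊤ := ENNReal.rpow_ne_top_of_nonneg (by positivity) hItop
  have hJ0 : I ^ (1 / (p + 1)) ≠ 0 := by
    intro h
    rcases ENNReal.rpow_eq_zero_iff.1 h with ⟨h1, _⟩ | ⟨h1, _⟩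
    · exact hIne0 h1
    · exact hItop h1
  set t := (I ^ (1 / (p + 1))).toReal with htdef
  have ht : 0 < t := ENNReal.toReal_pos hJ0 hJ
  have hIt : I ^ (1 / (p + 1)) = ENNReal.ofReal t := (ENNReal.ofReal_toReal hJ).symm
  set δ := t / (2 * K₀) with hδdef
  have hδ : 0 < δ := by positivity
  have h2Kδ : 2 * K₀ * δ = t := by rw [hδdef]; field_simp
  -- useful transfer facts
  have hPXnull : ∀ s : Set (Euc d), volume s = 0 → P (X ⁻¹' s) = 0 := by
    intro s hs
    have h1 : P.map X s = 0 := by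
      rw [hdX]; exact (withDensity_absolutelyContinuous volume pX) hs
    exact le_antisymm (h1 ▸ Measure.le_map_apply hX.aemeasurable s) (zero_le)
  have hPXhnull : ∀ s : Set (Euc d), volume s = 0 → P (Xh ⁻¹' s) = 0 := by
    intro s hs
    have h1 : P.map Xh s = 0 := by
      rw [hdXh]; exact (withDensity_absolutelyContinuous volume pXh) hs
    exact le_antisymm (h1 ▸ Measure.le_map_apply hXh.aemeasurable s) (zero_le)
  have hlawX : ∀ s : Set (Euc d), MeasurableSet s → P (X ⁻¹' s) ≤ SX * volume s := by
    intro s hs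
    rw [← Measure.map_apply hX hs, hdX, withDensity_apply _ hs]
    calc ∫⁻ x in s, pX x ∂volume ≤ ∫⁻ _x in s, SX ∂volume :=
      lintegral_mono_ae (ae_restrict_of_ae (ae_le_essSup (f := pX)))
    _ = SX * volume s := by rw [setLIntegral_const]
  have hlawXh : ∀ s : Set (Euc d), MeasurableSet s → P (Xh ⁻¹' s) ≤ SXh * volume s := by
    intro s hs
    rw [← Measure.map_apply hXh hs, hdXh, withDensity_apply _ hs]
    calc ∫⁻ x in s, pXh x ∂volume ≤ ∫⁻ _x in s, SXh ∂volume :=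
      lintegral_mono_ae (ae_restrict_of_ae (ae_le_essSup (f := pXh)))
    _ = SXh * volume s := by rw [setLIntegral_const]
  -- a.e. two-variable estimate, rephrased
  have hQae : ∀ᵐ x ∂(volume : Measure (Euc d)), ∀ᵐ y ∂(volume : Measure (Euc d)),
      QQ K₀ f M x y := hpt
  have hQae' : ∀ᵐ y ∂(volume : Measure (Euc d)), ∀ᵐ x ∂(volume : Measure (Euc d)),
      QQ K₀ f M x y := hQae.mono fun a ha => ha.mono fun b hb => QQ_symm hb
  have hptP : ∀ᵐ ω ∂P, ∀ᵐ y ∂(volume : Measure (Euc d)), QQ K₀ f M (X ω) y := by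
    rw [ae_iff]
    exact hPXnull {x | ¬ ∀ᵐ y ∂(volume : Measure (Euc d)), QQ K₀ f M x y} (ae_iff.1 hQae)
  have hptPh : ∀ᵐ ω ∂P, ∀ᵐ x ∂(volume : Measure (Euc d)), QQ K₀ f M x (Xh ω) := by
    rw [ae_iff]
    exact hPXhnull {y | ¬ ∀ᵐ x ∂(volume : Measure (Euc d)), QQ K₀ f M x y} (ae_iff.1 hQae')
  -- the pieces Φ ≤ G1 + G2
  set G1 : Ω → ℝ≥0∞ := fun ω => (edist (X ω) (Xh ω) / ENNReal.ofReal δ) ^ p with hG1def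
  set G2 : Ω → ℝ≥0∞ := fun ω =>
    if edist (X ω) (Xh ω) ≤ ENNReal.ofReal δ then Φ ω else 0 with hG2def
  have hG1m : Measurable G1 := ((hX.edist hXh).div_const _).pow_const p
  have hG2m : Measurable G2 :=
    Measurable.ite (measurableSet_le (hX.edist hXh) measurable_const) hΦm measurable_const
  have hδ0 : ENNReal.ofReal δ ≠ 0 := (ENNReal.ofReal_pos.2 hδ).ne'
  have hδt : ENNReal.ofReal δ ≠ ⊤ := ENNReal.ofReal_ne_top
  have hsplit : ∀ ω, Φ ω ≤ G1 ω + G2 ω := by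
    intro ω
    by_cases h : edist (X ω) (Xh ω) ≤ ENNReal.ofReal δ
    · have : G2 ω = Φ ω := if_pos h
      rw [this]
      exact le_add_self
    · have h1 : (1:ℝ≥0∞) ≤ G1 ω := by
        apply ENNReal.one_le_rpow _ hp
        calc (1:ℝ≥0∞) = ENNReal.ofReal δ / ENNReal.ofReal δ := (ENNReal.div_self hδ0 hδt).symm
        _ ≤ edist (X ω) (Xh ω) / ENNReal.ofReal δ :=
            ENNReal.div_le_div_right (le_of_lt (not_le.1 h)) _
      have h2 : Φ ω ≤ 1 := by
        apply ENNReal.ofReal_le_one.2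
        rcases hf01 (X ω) with ha | ha <;> rcases hf01 (Xh ω) with hb | hb <;>
          rw [ha, hb] <;> norm_num
      exact le_trans (h2.trans h1) le_self_add
  -- value of ∫ G1
  have hval1 : ∫⁻ ω, G1 ω ∂P = ENNReal.ofReal ((2 * K₀) ^ p) * ENNReal.ofReal t := by
    have hIeq : I = ENNReal.ofReal (t ^ (p + 1)) := by
      rw [← ENNReal.ofReal_rpow_of_pos ht, ← hIt, ← ENNReal.rpow_mul,
        one_div_mul_cancel (by linarith : p + 1 ≠ 0), ENNReal.rpow_one]
    have hreal : t ^ (p + 1) / δ ^ p = (2 * K₀) ^ p * t := by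
      rw [hδdef, Real.div_rpow ht.le (by positivity : (0:ℝ) ≤ 2 * K₀),
        Real.rpow_add_one ht.ne']
      have h2K : ((2:ℝ) * K₀) ^ p ≠ 0 := (Real.rpow_pos_of_pos (by linarith) p).ne'
      have htp : (t:ℝ) ^ p ≠ 0 := (Real.rpow_pos_of_pos ht p).ne'
      field_simp
    calc ∫⁻ ω, G1 ω ∂P
        = ∫⁻ ω, edist (X ω) (Xh ω) ^ p * ((ENNReal.ofReal δ) ^ p)⁻¹ ∂P := by
          apply lintegral_congr
          intro ω
          simp only [hG1def]
          rw [ENNReal.div_rpow_of_nonneg _ _ hp.le, div_eq_mul_inv]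
    _ = I * ((ENNReal.ofReal δ) ^ p)⁻¹ := by
          rw [lintegral_mul_const _ ((hX.edist hXh).pow_const p)]
    _ = I / (ENNReal.ofReal δ) ^ p := by rw [div_eq_mul_inv]
    _ = ENNReal.ofReal (t ^ (p + 1)) / ENNReal.ofReal (δ ^ p) := by
          rw [hIeq, ENNReal.ofReal_rpow_of_pos hδ]
    _ = ENNReal.ofReal (t ^ (p + 1) / δ ^ p) := by
          rw [ENNReal.ofReal_div_of_pos (Real.rpow_pos_of_pos hδ p)]
    _ = ENNReal.ofReal ((2 * K₀) ^ p) * ENNReal.ofReal t := by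
          rw [hreal, ENNReal.ofReal_mul (Real.rpow_nonneg (by linarith) p)]
    -- the auxiliary probability measure on the unit ball
  set v := volume (closedBall (0:Euc d) 1) with hv
  have hv0 : v ≠ 0 := (measure_closedBall_pos volume _ one_pos).ne'
  have hvtop : v ≠ ⊤ := measure_closedBall_lt_top.ne
  set μ : Measure (Euc d) := v⁻¹ • volume.restrict (closedBall (0:Euc d) 1) with hμdef
  haveI hμprob : IsProbabilityMeasure μ := by
    constructor
    rw [hμdef, Measure.smul_apply, Measure.restrict_apply_univ, smul_eq_mul,
      ENNReal.inv_mul_cancel hv0 hvtop]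
  have hμnull : ∀ s : Set (Euc d), volume s = 0 → μ s = 0 := by
    intro s hs
    rw [hμdef, Measure.smul_apply, smul_eq_mul]
    have h1 : volume.restrict (closedBall (0:Euc d) 1) s = 0 :=
      le_antisymm (le_trans (Measure.le_iff'.1 Measure.restrict_le_self s) hs.le) (zero_le)
    rw [h1, mul_zero]
  have hμn : ∀ᵐ u ∂μ, ‖u‖ ≤ 1 := by
    rw [hμdef]
    apply Measure.ae_smul_measure
    filter_upwards [ae_restrict_mem measurableSet_closedBall] with u hu
    rwa [mem_closedBall_zero_iff] at hu
  set Pr := P.prod μ with hPrdef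
  -- key estimate for every e > 0
  have key : ∀ e : ℝ, 0 < e →
      ∫⁻ ω, Φ ω ∂P ≤ ENNReal.ofReal ((2 * K₀) ^ p) * ENNReal.ofReal t
        + ENNReal.ofReal A₁ * (SX + SXh) * DE Set.univ * ENNReal.ofReal t
        + (2 * SX + (SX + SXh)) * (ENNReal.ofReal A₁ * DE Set.univ)
            * ENNReal.ofReal (2 * K₀ * (2 * e)) := by
    intro e he
    set lam1 := ENNReal.ofReal (1/(2*K₀*(2*e))) with hlam1def
    set lam2 := ENNReal.ofReal (1/(2*K₀*(δ+2*e))) with hlam2def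
    have hlam1ne : lam1 ≠ 0 := (ENNReal.ofReal_pos.2 (by positivity)).ne'
    have hlam2ne : lam2 ≠ 0 := (ENNReal.ofReal_pos.2 (by positivity)).ne'
    have hMS1 : MeasurableSet {x : Euc d | lam1 < M x} := measurableSet_lt measurable_const hMm
    have hMS2 : MeasurableSet {x : Euc d | lam2 < M x} := measurableSet_lt measurable_const hMm
    have hconv : ∀ c : ℝ, 0 < c → (ENNReal.ofReal A₁ * DE Set.univ) / ENNReal.ofReal (1/c)
        = (ENNReal.ofReal A₁ * DE Set.univ) * ENNReal.ofReal c := by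
      intro c hc
      rw [div_eq_mul_inv, one_div, ENNReal.ofReal_inv_of_pos hc, inv_inv]
    have hWvol1 : volume {x : Euc d | lam1 < M x}
        ≤ ENNReal.ofReal A₁ * DE Set.univ * ENNReal.ofReal (2*K₀*(2*e)) :=
      le_of_le_of_eq (hweak lam1 hlam1ne) (hconv _ (by positivity))
    have hWvol2 : volume {x : Euc d | lam2 < M x}
        ≤ ENNReal.ofReal A₁ * DE Set.univ * ENNReal.ofReal (2*K₀*(δ+2*e)) :=
      le_of_le_of_eq (hweak lam2 hlam2ne) (hconv _ (by positivity))
    have hmid : Measurable fun z : Ω × Euc d => X z.1 + e • z.2 :=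
      (hX.comp measurable_fst).add (measurable_snd.const_smul e)
    have hS1m : MeasurableSet {z : Ω × Euc d | lam1 < M (X z.1)} := (hX.comp measurable_fst) hMS1
    have hS2m : MeasurableSet {z : Ω × Euc d | lam1 < M (X z.1 + e • z.2)} := hmid hMS1
    have hS3m : MeasurableSet {z : Ω × Euc d | lam2 < M (X z.1 + e • z.2)} := hmid hMS2
    have hS4m : MeasurableSet {z : Ω × Euc d | lam2 < M (Xh z.1)} := (hXh.comp measurable_fst) hMS2
    -- probability bounds for the four sets
    have hPB1 : Pr {z : Ω × Euc d | lam1 < M (X z.1)}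
        ≤ SX * (ENNReal.ofReal A₁ * DE Set.univ * ENNReal.ofReal (2*K₀*(2*e))) := by
      rw [show {z : Ω × Euc d | lam1 < M (X z.1)}
          = {ω : Ω | lam1 < M (X ω)} ×ˢ (univ : Set (Euc d)) from by ext z; simp,
        hPrdef, Measure.prod_prod, measure_univ (μ := μ), mul_one]
      exact le_trans (hlawX _ hMS1) (mul_le_mul_right hWvol1 _)
    have hPB4 : Pr {z : Ω × Euc d | lam2 < M (Xh z.1)}
        ≤ SXh * (ENNReal.ofReal A₁ * DE Set.univ * ENNReal.ofReal (2*K₀*(δ+2*e))) := by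
      rw [show {z : Ω × Euc d | lam2 < M (Xh z.1)}
          = {ω : Ω | lam2 < M (Xh ω)} ×ˢ (univ : Set (Euc d)) from by ext z; simp,
        hPrdef, Measure.prod_prod, measure_univ (μ := μ), mul_one]
      exact le_trans (hlawXh _ hMS2) (mul_le_mul_right hWvol2 _)
    have hPB2 : Pr {z : Ω × Euc d | lam1 < M (X z.1 + e • z.2)}
        ≤ SX * (ENNReal.ofReal A₁ * DE Set.univ * ENNReal.ofReal (2*K₀*(2*e))) := by
      rw [hPrdef, Measure.prod_apply_symm hS2m]
      have hu : ∀ u : Euc d, P ((fun ω => (ω, u)) ⁻¹' {z : Ω × Euc d | lam1 < M (X z.1 + e • z.2)})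
          ≤ SX * (ENNReal.ofReal A₁ * DE Set.univ * ENNReal.ofReal (2*K₀*(2*e))) := by
        intro u
        have hpre : ((fun ω => (ω, u)) ⁻¹' {z : Ω × Euc d | lam1 < M (X z.1 + e • z.2)})
            = X ⁻¹' ((· + e • u) ⁻¹' {x : Euc d | lam1 < M x}) := rfl
        rw [hpre]
        calc P (X ⁻¹' ((· + e • u) ⁻¹' {x : Euc d | lam1 < M x}))
            ≤ SX * volume ((· + e • u) ⁻¹' {x : Euc d | lam1 < M x}) :=
              hlawX _ ((measurable_add_const (e • u)) hMS1)
        _ = SX * volume {x : Euc d | lam1 < M x} := by rw [measure_preimage_add_right]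
        _ ≤ _ := mul_le_mul_right hWvol1 _
      calc ∫⁻ u, P ((fun ω => (ω, u)) ⁻¹' {z : Ω × Euc d | lam1 < M (X z.1 + e • z.2)}) ∂μ
          ≤ ∫⁻ _u, SX * (ENNReal.ofReal A₁ * DE Set.univ * ENNReal.ofReal (2*K₀*(2*e))) ∂μ :=
            lintegral_mono hu
      _ = _ := by rw [lintegral_const, measure_univ (μ := μ), mul_one]
    have hPB3 : Pr {z : Ω × Euc d | lam2 < M (X z.1 + e • z.2)}
        ≤ SX * (ENNReal.ofReal A₁ * DE Set.univ * ENNReal.ofReal (2*K₀*(δ+2*e))) := by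
      rw [hPrdef, Measure.prod_apply_symm hS3m]
      have hu : ∀ u : Euc d, P ((fun ω => (ω, u)) ⁻¹' {z : Ω × Euc d | lam2 < M (X z.1 + e • z.2)})
          ≤ SX * (ENNReal.ofReal A₁ * DE Set.univ * ENNReal.ofReal (2*K₀*(δ+2*e))) := by
        intro u
        have hpre : ((fun ω => (ω, u)) ⁻¹' {z : Ω × Euc d | lam2 < M (X z.1 + e • z.2)})
            = X ⁻¹' ((· + e • u) ⁻¹' {x : Euc d | lam2 < M x}) := rfl
        rw [hpre]
        calc P (X ⁻¹' ((· + e • u) ⁻¹' {x : Euc d | lam2 < M x}))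
            ≤ SX * volume ((· + e • u) ⁻¹' {x : Euc d | lam2 < M x}) :=
              hlawX _ ((measurable_add_const (e • u)) hMS2)
        _ = SX * volume {x : Euc d | lam2 < M x} := by rw [measure_preimage_add_right]
        _ ≤ _ := mul_le_mul_right hWvol2 _
      calc ∫⁻ u, P ((fun ω => (ω, u)) ⁻¹' {z : Ω × Euc d | lam2 < M (X z.1 + e • z.2)}) ∂μ
          ≤ ∫⁻ _u, SX * (ENNReal.ofReal A₁ * DE Set.univ * ENNReal.ofReal (2*K₀*(δ+2*e))) ∂μ :=
            lintegral_mono hu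
      _ = _ := by rw [lintegral_const, measure_univ (μ := μ), mul_one]
    -- a.e. facts on the product space
    have haff : ∀ (c : Euc d) (s : Set (Euc d)), volume s = 0 →
        μ ((fun u => c + e • u) ⁻¹' s) = 0 := by
      intro c s hs
      apply hμnull
      rw [show ((fun u : Euc d => c + e • u) ⁻¹' s) = (e • ·) ⁻¹' ((c + ·) ⁻¹' s) from rfl,
        Measure.addHaar_preimage_smul volume he.ne', measure_preimage_add, hs, mul_zero]
    have hNAm : MeasurableSet {z : Ω × Euc d | ¬ QQ K₀ f M (X z.1) (X z.1 + e • z.2)} := by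
      have heq : {z : Ω × Euc d | ¬ QQ K₀ f M (X z.1) (X z.1 + e • z.2)}
          = (fun z : Ω × Euc d => (X z.1, X z.1 + e • z.2))
            ⁻¹' {w : Euc d × Euc d | QQ K₀ f M w.1 w.2}ᶜ := rfl
      rw [heq]
      exact ((hX.comp measurable_fst).prodMk hmid) (measurableSet_QQ hfm hMm).compl
    have hNBm : MeasurableSet {z : Ω × Euc d | ¬ QQ K₀ f M (X z.1 + e • z.2) (Xh z.1)} := by
      have heq : {z : Ω × Euc d | ¬ QQ K₀ f M (X z.1 + e • z.2) (Xh z.1)}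
          = (fun z : Ω × Euc d => (X z.1 + e • z.2, Xh z.1))
            ⁻¹' {w : Euc d × Euc d | QQ K₀ f M w.1 w.2}ᶜ := rfl
      rw [heq]
      exact (hmid.prodMk (hXh.comp measurable_fst)) (measurableSet_QQ hfm hMm).compl
    have FA : ∀ᵐ z ∂Pr, QQ K₀ f M (X z.1) (X z.1 + e • z.2) := by
      rw [ae_iff, hPrdef, Measure.measure_prod_null hNAm]
      filter_upwards [hptP] with ω hω
      show μ (Prod.mk ω ⁻¹' {z : Ω × Euc d | ¬ QQ K₀ f M (X z.1) (X z.1 + e • z.2)}) = 0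
      exact haff (X ω) {y : Euc d | ¬ QQ K₀ f M (X ω) y} (ae_iff.1 hω)
    have FB : ∀ᵐ z ∂Pr, QQ K₀ f M (X z.1 + e • z.2) (Xh z.1) := by
      rw [ae_iff, hPrdef, Measure.measure_prod_null hNBm]
      filter_upwards [hptPh] with ω hω
      show μ (Prod.mk ω ⁻¹' {z : Ω × Euc d | ¬ QQ K₀ f M (X z.1 + e • z.2) (Xh z.1)}) = 0
      exact haff (X ω) {x : Euc d | ¬ QQ K₀ f M x (Xh ω)} (ae_iff.1 hω)
    have Fn : ∀ᵐ z ∂Pr, ‖z.2‖ ≤ 1 := by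
      rw [ae_iff, hPrdef]
      rw [show {z : Ω × Euc d | ¬ ‖z.2‖ ≤ 1}
          = (univ : Set Ω) ×ˢ {u : Euc d | ¬ ‖u‖ ≤ 1} from by ext z; simp,
        Measure.prod_prod, measure_univ, one_mul]
      exact ae_iff.1 hμn
    -- transfer ∫ G2 to the product space and bound it pointwise a.e.
    have hstep1 : ∫⁻ ω, G2 ω ∂P = ∫⁻ z, G2 z.1 ∂Pr := by
      calc ∫⁻ ω, G2 ω ∂P = ∫⁻ ω, G2 ω ∂((μ Set.univ) • P) := by rw [measure_univ, one_smul]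
      _ = ∫⁻ ω, G2 ω ∂(Measure.map Prod.fst Pr) := by rw [hPrdef, Measure.map_fst_prod]
      _ = ∫⁻ z, G2 z.1 ∂Pr := lintegral_map hG2m measurable_fst
    have hmono : ∫⁻ z, G2 z.1 ∂Pr ≤ ∫⁻ z,
        ({z : Ω × Euc d | lam1 < M (X z.1)}.indicator 1 z
          + ({z : Ω × Euc d | lam1 < M (X z.1 + e • z.2)}.indicator 1 z
            + ({z : Ω × Euc d | lam2 < M (X z.1 + e • z.2)}.indicator 1 z
              + {z : Ω × Euc d | lam2 < M (Xh z.1)}.indicator 1 z))) ∂Pr := by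
      apply lintegral_mono_ae
      filter_upwards [FA, FB, Fn] with z hA hB hn
      by_cases hc : edist (X z.1) (Xh z.1) ≤ ENNReal.ofReal δ
      swap
      · rw [show G2 z.1 = 0 from if_neg hc]
        exact zero_le
      rw [show G2 z.1 = Φ z.1 from if_pos hc]
      by_cases hff : f (X z.1) = f (Xh z.1)
      · rw [show Φ z.1 = 0 from by simp [hΦdef, hff]]
        exact zero_le
      rw [show Φ z.1 = 1 from habs1 _ _ hff]
      have hdistA : dist (X z.1) (X z.1 + e • z.2) ≤ e := by
        rw [dist_self_add_right, norm_smul, Real.norm_eq_abs, abs_of_pos he]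
        calc e * ‖z.2‖ ≤ e * 1 := mul_le_mul_of_nonneg_left hn he.le
        _ = e := mul_one e
      have hdXXh : dist (X z.1) (Xh z.1) ≤ δ := by
        rw [edist_dist] at hc
        exact (ENNReal.ofReal_le_ofReal_iff hδ.le).1 hc
      have hsplit2 : f (X z.1) ≠ f (X z.1 + e • z.2) ∨ f (X z.1 + e • z.2) ≠ f (Xh z.1) := by
        by_contra hno
        push_neg at hno
        exact hff (hno.1.trans hno.2)
      rcases hsplit2 with hca | hcb
      · rcases maximal_lower hK₀ hf01 he.le (show e < 2*e by linarith) hdistA hA hca with h | h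
          <;> rw [← hlam1def] at h
        · calc (1:ℝ≥0∞) = {z : Ω × Euc d | lam1 < M (X z.1)}.indicator 1 z := by
                rw [Set.indicator_of_mem
                  (show z ∈ {w : Ω × Euc d | lam1 < M (X w.1)} from h)]; rfl
          _ ≤ _ := self_le_add_right _ _
        · calc (1:ℝ≥0∞) = {z : Ω × Euc d | lam1 < M (X z.1 + e • z.2)}.indicator 1 z := by
                rw [Set.indicator_of_mem
                  (show z ∈ {w : Ω × Euc d | lam1 < M (X w.1 + e • w.2)} from h)]; rfl
          _ ≤ {z : Ω × Euc d | lam1 < M (X z.1 + e • z.2)}.indicator 1 z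
              + ({z : Ω × Euc d | lam2 < M (X z.1 + e • z.2)}.indicator 1 z
                + {z : Ω × Euc d | lam2 < M (Xh z.1)}.indicator 1 z) := self_le_add_right _ _
          _ ≤ _ := le_add_self
      · have hdB : dist (X z.1 + e • z.2) (Xh z.1) ≤ δ + e := by
          calc dist (X z.1 + e • z.2) (Xh z.1)
              ≤ dist (X z.1 + e • z.2) (X z.1) + dist (X z.1) (Xh z.1) := dist_triangle _ _ _
          _ ≤ e + δ := add_le_add (by rw [dist_comm]; exact hdistA) hdXXh
          _ = δ + e := add_comm e δ
        rcases maximal_lower hK₀ hf01 (by positivity : (0:ℝ) ≤ δ + e)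
            (show δ + e < δ + 2*e by linarith) hdB hB hcb with h | h
          <;> rw [← hlam2def] at h
        · calc (1:ℝ≥0∞) = {z : Ω × Euc d | lam2 < M (X z.1 + e • z.2)}.indicator 1 z := by
                rw [Set.indicator_of_mem
                  (show z ∈ {w : Ω × Euc d | lam2 < M (X w.1 + e • w.2)} from h)]; rfl
          _ ≤ {z : Ω × Euc d | lam2 < M (X z.1 + e • z.2)}.indicator 1 z
              + {z : Ω × Euc d | lam2 < M (Xh z.1)}.indicator 1 z := self_le_add_right _ _
          _ ≤ {z : Ω × Euc d | lam1 < M (X z.1 + e • z.2)}.indicator 1 z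
              + ({z : Ω × Euc d | lam2 < M (X z.1 + e • z.2)}.indicator 1 z
                + {z : Ω × Euc d | lam2 < M (Xh z.1)}.indicator 1 z) := le_add_self
          _ ≤ _ := le_add_self
        · calc (1:ℝ≥0∞) = {z : Ω × Euc d | lam2 < M (Xh z.1)}.indicator 1 z := by
                rw [Set.indicator_of_mem
                  (show z ∈ {w : Ω × Euc d | lam2 < M (Xh w.1)} from h)]; rfl
          _ ≤ {z : Ω × Euc d | lam2 < M (X z.1 + e • z.2)}.indicator 1 z
              + {z : Ω × Euc d | lam2 < M (Xh z.1)}.indicator 1 z := le_add_self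
          _ ≤ {z : Ω × Euc d | lam1 < M (X z.1 + e • z.2)}.indicator 1 z
              + ({z : Ω × Euc d | lam2 < M (X z.1 + e • z.2)}.indicator 1 z
                + {z : Ω × Euc d | lam2 < M (Xh z.1)}.indicator 1 z) := le_add_self
          _ ≤ _ := le_add_self
    have hsum : ∫⁻ z,
        ({z : Ω × Euc d | lam1 < M (X z.1)}.indicator 1 z
          + ({z : Ω × Euc d | lam1 < M (X z.1 + e • z.2)}.indicator 1 z
            + ({z : Ω × Euc d | lam2 < M (X z.1 + e • z.2)}.indicator 1 z
              + {z : Ω × Euc d | lam2 < M (Xh z.1)}.indicator 1 z))) ∂Pr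
        = Pr {z : Ω × Euc d | lam1 < M (X z.1)}
          + (Pr {z : Ω × Euc d | lam1 < M (X z.1 + e • z.2)}
            + (Pr {z : Ω × Euc d | lam2 < M (X z.1 + e • z.2)}
              + Pr {z : Ω × Euc d | lam2 < M (Xh z.1)})) := by
      rw [lintegral_add_left (measurable_one.indicator hS1m),
        lintegral_add_left (measurable_one.indicator hS2m),
        lintegral_add_left (measurable_one.indicator hS3m),
        lintegral_indicator_one hS1m, lintegral_indicator_one hS2m,
        lintegral_indicator_one hS3m, lintegral_indicator_one hS4m]
    have hG2bound : ∫⁻ ω, G2 ω ∂P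
        ≤ SX * (ENNReal.ofReal A₁ * DE Set.univ * ENNReal.ofReal (2*K₀*(2*e)))
          + (SX * (ENNReal.ofReal A₁ * DE Set.univ * ENNReal.ofReal (2*K₀*(2*e)))
            + (SX * (ENNReal.ofReal A₁ * DE Set.univ * ENNReal.ofReal (2*K₀*(δ+2*e)))
              + SXh * (ENNReal.ofReal A₁ * DE Set.univ * ENNReal.ofReal (2*K₀*(δ+2*e))))) := by
      rw [hstep1]
      exact le_trans (hmono.trans (le_of_eq hsum))
        (add_le_add hPB1 (add_le_add hPB2 (add_le_add hPB3 hPB4)))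
    have hW2 : ENNReal.ofReal (2*K₀*(δ+2*e))
        = ENNReal.ofReal t + ENNReal.ofReal (2*K₀*(2*e)) := by
      rw [← ENNReal.ofReal_add ht.le (by positivity)]
      congr 1
      rw [← h2Kδ]
      ring
    have hring : ∀ (a s1 s2 c1 c2 w tt : ℝ≥0∞),
        a + (s1 * (c1 * c2 * w) + (s1 * (c1 * c2 * w)
          + (s1 * (c1 * c2 * (tt + w)) + s2 * (c1 * c2 * (tt + w)))))
        = a + c1 * (s1 + s2) * c2 * tt + (2 * s1 + (s1 + s2)) * (c1 * c2) * w := by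
      intros a s1 s2 c1 c2 w tt
      ring
    calc ∫⁻ ω, Φ ω ∂P ≤ ∫⁻ ω, (G1 ω + G2 ω) ∂P := lintegral_mono hsplit
    _ = ∫⁻ ω, G1 ω ∂P + ∫⁻ ω, G2 ω ∂P := lintegral_add_left hG1m _
    _ ≤ ENNReal.ofReal ((2 * K₀) ^ p) * ENNReal.ofReal t
        + (SX * (ENNReal.ofReal A₁ * DE Set.univ * ENNReal.ofReal (2*K₀*(2*e)))
          + (SX * (ENNReal.ofReal A₁ * DE Set.univ * ENNReal.ofReal (2*K₀*(2*e)))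
            + (SX * (ENNReal.ofReal A₁ * DE Set.univ * ENNReal.ofReal (2*K₀*(δ+2*e)))
              + SXh * (ENNReal.ofReal A₁ * DE Set.univ * ENNReal.ofReal (2*K₀*(δ+2*e)))))) := by
          rw [hval1]
          exact add_le_add_right hG2bound _
    _ = ENNReal.ofReal ((2 * K₀) ^ p) * ENNReal.ofReal t
        + ENNReal.ofReal A₁ * (SX + SXh) * DE Set.univ * ENNReal.ofReal t
        + (2 * SX + (SX + SXh)) * (ENNReal.ofReal A₁ * DE Set.univ)
            * ENNReal.ofReal (2 * K₀ * (2 * e)) := by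
          rw [hW2]
          exact hring _ _ _ _ _ _ _
  -- pass to the limit e → 0 via an ε argument
  rw [hIt, add_mul]
  set C := (2 * SX + (SX + SXh)) * (ENNReal.ofReal A₁ * DE Set.univ) with hCdef
  have hCtop : C ≠ ⊤ := by
    apply ENNReal.mul_ne_top
    · exact ENNReal.add_ne_top.2 ⟨ENNReal.mul_ne_top (by simp) hbX,
        ENNReal.add_ne_top.2 ⟨hbX, hbXh⟩⟩
    · exact ENNReal.mul_ne_top ENNReal.ofReal_ne_top (measure_ne_top DE _)
  apply ENNReal.le_of_forall_pos_le_add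
  intro ε hε _hlt
  by_cases hC0 : C = 0
  · refine le_trans (key 1 one_pos) ?_
    rw [hC0, zero_mul, add_zero]
    exact le_self_add
  · have hdiv_ne_top : (ε : ℝ≥0∞) / C ≠ ⊤ := (ENNReal.div_lt_top ENNReal.coe_ne_top hC0).ne
    have hdiv_ne_zero : (ε : ℝ≥0∞) / C ≠ 0 := by
      intro h0
      rcases ENNReal.div_eq_zero_iff.1 h0 with h | h
      · exact (ENNReal.coe_ne_zero.2 hε.ne') h
      · exact hCtop h
    set e := ((ε : ℝ≥0∞) / C).toReal / (4 * K₀) with he_def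
    have he : 0 < e :=
      div_pos (ENNReal.toReal_pos hdiv_ne_zero hdiv_ne_top) (by positivity)
    refine le_trans (key e he) ?_
    apply add_le_add_right
    have harith : ∀ x : ℝ, 2 * K₀ * (2 * (x / (4 * K₀))) = x := by
      intro x; field_simp; ring
    have heq : ENNReal.ofReal (2 * K₀ * (2 * e)) = (ε : ℝ≥0∞) / C := by
      rw [show 2 * K₀ * (2 * e) = ((ε : ℝ≥0∞) / C).toReal from by
        rw [he_def]; exact harith _]
      exact ENNReal.ofReal_toReal hdiv_ne_top
    rw [heq]
    exact ENNReal.mul_div_le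
end
end

section
/- Let X and X̂ be ℝ^d-valued random variables with bounded densities p_X, p_X̂ with respect to Lebesgue measure. Then for every essentially bounded function f of bounded variation on ℝ^d, every p ∈ (0,∞) and q ∈ [1,∞), E[|f(X) − f(X̂)|^q] ≤ (2‖f‖_∞)^{q−1}(2^{p+1}K₀^p ‖f‖_∞ + A₁(‖p_X‖_∞ + ‖p_X̂‖_∞)|Df|(ℝ^d)) · (E[|X − X̂|^p])^{1/(p+1)}. -/
open MeasureTheory Metric Filter Set
open scoped ENNReal Topology

noncomputable section

lemma maximalR_le_maximal {d : ℕ} (R : ℝ) (ν : Measure (Euc d)) (x : Euc d) :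
    maximalR R ν x ≤ maximal ν x := by
  refine iSup₂_le fun s hs => ?_
  exact le_iSup₂ (f := fun s (_ : 0 < s) => ν (closedBall x s) / volume (closedBall x s)) s hs.1

lemma exists_mem_of_measure_ne_zero {α : Type*} [MeasurableSpace α] {μ : Measure α}
    {s : Set α} (hs : μ s ≠ 0) {Q : α → Prop} (hQ : ∀ᵐ z ∂μ, Q z) : ∃ z ∈ s, Q z := by
  by_contra h
  push_neg at h
  exact hs (measure_mono_null (fun z hz => h z hz) (ae_iff.mp hQ))

lemma keyLemma {d : ℕ} (ν : Measure (Euc d)) (g : Euc d → ℝ)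
    (hg01 : ∀ x, g x = 0 ∨ g x = 1) (K₀ e : ℝ) (hK₀ : 0 < K₀) (he : 0 < e)
    (H : ∀ᵐ x ∂(volume : Measure (Euc d)), ∀ᵐ y ∂(volume : Measure (Euc d)),
      ENNReal.ofReal |g x - g y| ≤ ENNReal.ofReal (K₀ * dist x y)
        * (maximalR (2 * dist x y) ν x + maximalR (2 * dist x y) ν y)) :
    ∃ N : Set (Euc d), volume N = 0 ∧ ∀ x y : Euc d, x ∉ N → y ∉ N →
      x ∉ toMeasurable volume {z | ENNReal.ofReal (1/(2*K₀*e)) < maximal ν z} →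
      y ∉ toMeasurable volume {z | ENNReal.ofReal (1/(2*K₀*e)) < maximal ν z} →
      dist x y < e → g x = g y := by
  set lam : ℝ≥0∞ := ENNReal.ofReal (1/(2*K₀*e)) with hlam
  set S : Set (Euc d) := toMeasurable volume {z | lam < maximal ν z} with hS
  have hSm : MeasurableSet S := measurableSet_toMeasurable _ _
  set R' : Euc d → Euc d → Prop :=
    fun x y => x ∉ S → y ∉ S → dist x y < e → g x = g y with hR'
  -- upgrade H to R'
  have H' : ∀ᵐ x ∂(volume : Measure (Euc d)), ∀ᵐ y ∂(volume : Measure (Euc d)), R' x y := by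
    filter_upwards [H] with x hx
    filter_upwards [hx] with y hxy
    intro hxS hyS hd
    by_contra hne
    have h1 : |g x - g y| = 1 := by
      rcases hg01 x with h | h <;> rcases hg01 y with h' | h' <;>
        rw [h, h'] at hne ⊢ <;> norm_num at hne <;> norm_num
    have hmx : maximal ν x ≤ lam :=
      not_lt.1 fun hc => hxS (subset_toMeasurable _ _ hc)
    have hmy : maximal ν y ≤ lam :=
      not_lt.1 fun hc => hyS (subset_toMeasurable _ _ hc)
    have hle : (1 : ℝ≥0∞) ≤ ENNReal.ofReal (K₀ * dist x y) * (lam + lam) := by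
      have := hxy.trans (mul_le_mul_right
        (add_le_add ((maximalR_le_maximal _ _ _).trans hmx)
          ((maximalR_le_maximal _ _ _).trans hmy)) _)
      rwa [h1, ENNReal.ofReal_one] at this
    have hnn : (0:ℝ) ≤ K₀ * dist x y := mul_nonneg hK₀.le dist_nonneg
    rw [hlam, ← ENNReal.ofReal_add (by positivity) (by positivity),
      ← ENNReal.ofReal_mul hnn, ENNReal.one_le_ofReal] at hle
    have hd' : K₀ * dist x y * (1/(2*K₀*e) + 1/(2*K₀*e)) = dist x y / e := by
      field_simp
      ring
    rw [hd'] at hle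
    have : dist x y / e < 1 := (div_lt_one he).2 hd
    linarith
  -- density points
  have HD' : ∀ᵐ x ∂(volume : Measure (Euc d)), x ∈ Sᶜ →
      Tendsto (fun r => volume (Sᶜ ∩ closedBall x r) / volume (closedBall x r)) (𝓝[>] 0) (𝓝 1) :=
    (ae_restrict_iff' hSm.compl).1 (Besicovitch.ae_tendsto_measure_inter_div volume Sᶜ)
  refine ⟨{x | ¬ (∀ᵐ y ∂(volume : Measure (Euc d)), R' x y)} ∪
      {x | ¬ (x ∈ Sᶜ → Tendsto (fun r => volume (Sᶜ ∩ closedBall x r) / volume (closedBall x r))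
        (𝓝[>] 0) (𝓝 1))}, ?_, ?_⟩
  · exact measure_union_null (ae_iff.mp H') (ae_iff.mp HD')
  intro x y hxN hyN hxS hyS hd
  have hx1 : ∀ᵐ z ∂(volume : Measure (Euc d)), R' x z := by
    by_contra h; exact hxN (Or.inl h)
  have hy1 : ∀ᵐ z ∂(volume : Measure (Euc d)), R' y z := by
    by_contra h; exact hyN (Or.inl h)
  have hxT : Tendsto (fun r => volume (Sᶜ ∩ closedBall x r) / volume (closedBall x r))
      (𝓝[>] 0) (𝓝 1) := by
    have hx2 : ¬ ¬ (x ∈ Sᶜ → Tendsto (fun r => volume (Sᶜ ∩ closedBall x r) /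
        volume (closedBall x r)) (𝓝[>] 0) (𝓝 1)) := fun h => hxN (Or.inr h)
    exact (not_not.1 hx2) hxS
  set r : ℝ := e - dist x y with hr'
  have hr : 0 < r := by simp [hr']; linarith
  -- find a small radius with positive density
  have hev : ∀ᶠ s in 𝓝[>] (0:ℝ),
      0 < volume (Sᶜ ∩ closedBall x s) / volume (closedBall x s) :=
    hxT (Ioi_mem_nhds zero_lt_one)
  have hmem : Ioo (0:ℝ) r ∈ 𝓝[>] (0:ℝ) := Ioo_mem_nhdsGT_of_mem ⟨le_rfl, hr⟩
  obtain ⟨r', hr'pos, hr'mem⟩ := (hev.and (eventually_of_mem hmem fun z hz => hz)).exists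
  have hnum : volume (Sᶜ ∩ closedBall x r') ≠ 0 := by
    intro h0
    rw [h0, ENNReal.zero_div] at hr'pos
    exact lt_irrefl _ hr'pos
  obtain ⟨z, hzs, hzx, hzy⟩ := exists_mem_of_measure_ne_zero hnum (hx1.and hy1)
  have hdxz : dist x z < e := by
    have h1 : dist z x ≤ r' := hzs.2
    rw [dist_comm]
    linarith [hr'mem.2, dist_nonneg (x := x) (y := y)]
  have hdyz : dist y z < e := by
    have h1 : dist z x ≤ r' := hzs.2
    calc dist y z ≤ dist y x + dist x z := dist_triangle _ _ _
    _ < dist x y + r := by rw [dist_comm x z, dist_comm y x]; linarith [hr'mem.2]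
    _ = e := by rw [hr']; ring
  have h1 : g x = g z := hzx hxS hzs.1 hdxz
  have h2 : g y = g z := hzy hyS hzs.1 hdyz
  rw [h1, h2]

/-- Layer-cake formula for two points. -/
lemma layercake (a b : ℝ) :
    ∫⁻ t, ENNReal.ofReal |(if t < a then (1:ℝ) else 0) - (if t < b then (1:ℝ) else 0)|
      ∂(volume : Measure ℝ) = ENNReal.ofReal |a - b| := by
  have hfun : (fun t => ENNReal.ofReal
        |(if t < a then (1:ℝ) else 0) - (if t < b then (1:ℝ) else 0)|)
      = (Ico (min a b) (max a b)).indicator (fun _ => (1:ℝ≥0∞)) := by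
    funext t
    by_cases h1 : t < a <;> by_cases h2 : t < b
    · simp [Set.indicator_apply, Set.mem_Ico, not_le.2 (lt_min h1 h2), h1, h2]
    · have hm1 : min a b ≤ t := (min_le_right a b).trans (not_lt.1 h2)
      have hm2 : t < max a b := lt_of_lt_of_le h1 (le_max_left a b)
      simp only [h1, h2, if_true, if_false, Set.indicator_apply, Set.mem_Ico]
      rw [if_pos ⟨hm1, hm2⟩]
      norm_num
    · have hm1 : min a b ≤ t := (min_le_left a b).trans (not_lt.1 h1)
      have hm2 : t < max a b := lt_of_lt_of_le h2 (le_max_right a b)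
      simp only [h1, h2, if_true, if_false, Set.indicator_apply, Set.mem_Ico]
      rw [if_pos ⟨hm1, hm2⟩]
      norm_num
    · simp [Set.indicator_apply, Set.mem_Ico, not_lt.2 (max_le (not_lt.1 h1) (not_lt.1 h2)),
        h1, h2]
  rw [hfun, lintegral_indicator_const measurableSet_Ico, Real.volume_Ico, one_mul]
  rw [max_sub_min_eq_abs, abs_sub_comm]

/-- Multi-dimensional Avikainen estimate for essentially bounded BV functions
(Theorem 2.11 with `r = ∞`). `Df` is the total variation measure `|Df|` of `f`,
`DI t` the total variation measure `|D 1_{{f > t}}|` of the super-level sets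
(linked to `Df` by the coarea formula), `K₀` the constant of the pointwise
maximal-function estimate for BV functions and `A₁` the constant of the
Hardy–Littlewood weak (1,1) maximal inequality. -/
theorem stmt_1 {d : ℕ} {Ω : Type*} [MeasurableSpace Ω] (P : Measure Ω) [IsProbabilityMeasure P]
    (X Xh : Ω → Euc d) (hX : Measurable X) (hXh : Measurable Xh)
    (pX pXh : Euc d → ℝ≥0∞)
    (hdX : P.map X = volume.withDensity pX)
    (hdXh : P.map Xh = volume.withDensity pXh)
    (hbX : essSup pX volume ≠ ∞) (hbXh : essSup pXh volume ≠ ∞)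
    (f : Euc d → ℝ) (hf1 : Integrable f volume) (hfb : eLpNorm f ⊤ volume ≠ ∞)
    (Df : Measure (Euc d)) [IsFiniteMeasure Df]
    (DI : ℝ → Measure (Euc d))
    (hcoarea : ∫⁻ t, DI t Set.univ ∂(volume : Measure ℝ) = Df Set.univ)
    (K₀ A₁ : ℝ) (hK₀ : 0 < K₀) (hA₁ : 0 < A₁)
    (hpt : ∀ᵐ t ∂(volume : Measure ℝ), IsFiniteMeasure (DI t) ∧
      ∀ᵐ x ∂(volume : Measure (Euc d)), ∀ᵐ y ∂(volume : Measure (Euc d)),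
        ENNReal.ofReal |({z | t < f z}).indicator (fun _ => (1:ℝ)) x
            - ({z | t < f z}).indicator (fun _ => (1:ℝ)) y|
          ≤ ENNReal.ofReal (K₀ * dist x y)
            * (maximalR (2 * dist x y) (DI t) x + maximalR (2 * dist x y) (DI t) y))
    (hweak : ∀ ν : Measure (Euc d), IsFiniteMeasure ν → ∀ lam : ℝ≥0∞, lam ≠ 0 →
      volume {x : Euc d | lam < maximal ν x} ≤ ENNReal.ofReal A₁ * ν Set.univ / lam)
    (p q : ℝ) (hp : 0 < p) (hq : 1 ≤ q) :
    ∫⁻ ω, ENNReal.ofReal |f (X ω) - f (Xh ω)| ^ q ∂P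
      ≤ ENNReal.ofReal ((2 * (eLpNorm f ⊤ volume).toReal) ^ (q - 1))
        * (ENNReal.ofReal (2 ^ (p + 1) * K₀ ^ p * (eLpNorm f ⊤ volume).toReal)
            + ENNReal.ofReal A₁ * (essSup pX volume + essSup pXh volume) * Df Set.univ)
        * (∫⁻ ω, edist (X ω) (Xh ω) ^ p ∂P) ^ (1 / (p + 1)) := by
  classical
  have hq0 : (0:ℝ) < q := lt_of_lt_of_le zero_lt_one hq
  have hp1 : (0:ℝ) < p + 1 := by linarith
  -- measurable representative of f
  have hfae : AEMeasurable f (volume : Measure (Euc d)) := hf1.aemeasurable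
  set f' : Euc d → ℝ := hfae.mk f with hf'def
  have hf'm : Measurable f' := hfae.measurable_mk
  have hff' : ∀ᵐ x ∂(volume : Measure (Euc d)), f x = f' x := hfae.ae_eq_mk
  -- transfer of volume-a.e. statements to the laws
  have hTX : ∀ (Q : Euc d → Prop), (∀ᵐ x ∂(volume : Measure (Euc d)), Q x) →
      (∀ᵐ ω ∂P, Q (X ω)) := by
    intro Q h
    have h2 : ∀ᵐ x ∂(volume.withDensity pX), Q x :=
      (withDensity_absolutelyContinuous volume pX).ae_le h
    rw [← hdX] at h2
    exact ae_of_ae_map hX.aemeasurable h2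
  have hTXh : ∀ (Q : Euc d → Prop), (∀ᵐ x ∂(volume : Measure (Euc d)), Q x) →
      (∀ᵐ ω ∂P, Q (Xh ω)) := by
    intro Q h
    have h2 : ∀ᵐ x ∂(volume.withDensity pXh), Q x :=
      (withDensity_absolutelyContinuous volume pXh).ae_le h
    rw [← hdXh] at h2
    exact ae_of_ae_map hXh.aemeasurable h2
  -- trivial case: f is a.e. zero
  by_cases hM0 : eLpNorm f ⊤ volume = 0
  · have hf0 : ∀ᵐ x ∂(volume : Measure (Euc d)), f x = 0 := by
      have := (eLpNorm_eq_zero_iff hf1.aestronglyMeasurable (by simp)).1 hM0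
      filter_upwards [this] with x hx using hx
    have h1 : ∀ᵐ ω ∂P, f (X ω) = 0 := hTX _ hf0
    have h2 : ∀ᵐ ω ∂P, f (Xh ω) = 0 := hTXh _ hf0
    have hL : ∫⁻ ω, ENNReal.ofReal |f (X ω) - f (Xh ω)| ^ q ∂P = 0 := by
      rw [lintegral_congr_ae (g := fun _ => (0:ℝ≥0∞)) ?_, lintegral_zero]
      filter_upwards [h1, h2] with ω e1 e2
      rw [e1, e2, sub_zero, abs_zero, ENNReal.ofReal_zero, ENNReal.zero_rpow_of_pos hq0]
    rw [hL]; exact zero_le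
  set Mr := (eLpNorm f ⊤ volume).toReal with hMr
  have hMpos : 0 < Mr := ENNReal.toReal_pos hM0 hfb
  -- a.e. bound on f'
  have hMae : ∀ᵐ x ∂(volume : Measure (Euc d)), |f' x| ≤ Mr := by
    have hEq : eLpNormEssSup f' volume = eLpNorm f ⊤ volume := by
      rw [← eLpNorm_exponent_top, ← eLpNorm_congr_ae hff']
    filter_upwards [enorm_ae_le_eLpNormEssSup f' volume] with x hx
    rw [hEq] at hx
    have hx2 : ENNReal.ofReal |f' x| ≤ eLpNorm f ⊤ volume := by
      rwa [← Real.enorm_eq_ofReal_abs]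
    have h3 := ENNReal.toReal_mono hfb hx2
    rwa [ENNReal.toReal_ofReal (abs_nonneg _)] at h3
  have hedm : Measurable fun ω => edist (X ω) (Xh ω) ^ p := (hX.edist hXh).pow_const p
  -- trivial case: infinite p-th moment
  by_cases hEtop : ∫⁻ ω, edist (X ω) (Xh ω) ^ p ∂P = ⊤
  · have h1 : ENNReal.ofReal ((2*Mr)^(q-1)) ≠ 0 :=
      (ENNReal.ofReal_pos.2 (Real.rpow_pos_of_pos (by linarith) _)).ne'
    have h2 : ENNReal.ofReal (2 ^ (p + 1) * K₀ ^ p * Mr)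
        + ENNReal.ofReal A₁ * (essSup pX volume + essSup pXh volume) * Df Set.univ ≠ 0 := by
      have h3 : (0:ℝ≥0∞) < ENNReal.ofReal (2 ^ (p + 1) * K₀ ^ p * Mr) :=
        ENNReal.ofReal_pos.2 (by positivity)
      exact (lt_of_lt_of_le h3 le_self_add).ne'
    rw [hEtop, ENNReal.top_rpow_of_pos (by positivity), ENNReal.mul_top (mul_ne_zero h1 h2)]
    exact le_top
  -- trivial case: X = Xh a.s.
  by_cases hE0 : ∫⁻ ω, edist (X ω) (Xh ω) ^ p ∂P = 0
  · have h1 : ∀ᵐ ω ∂P, edist (X ω) (Xh ω) ^ p = 0 :=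
      (lintegral_eq_zero_iff' hedm.aemeasurable).1 hE0
    have h2 : ∀ᵐ ω ∂P, X ω = Xh ω := by
      filter_upwards [h1] with ω h
      rcases ENNReal.rpow_eq_zero_iff.1 h with ⟨h3, _⟩ | ⟨_, h4⟩
      · exact edist_eq_zero.1 h3
      · linarith
    have hL : ∫⁻ ω, ENNReal.ofReal |f (X ω) - f (Xh ω)| ^ q ∂P = 0 := by
      rw [lintegral_congr_ae (g := fun _ => (0:ℝ≥0∞)) ?_, lintegral_zero]
      filter_upwards [h2] with ω h
      rw [h, sub_self, abs_zero, ENNReal.ofReal_zero, ENNReal.zero_rpow_of_pos hq0]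
    rw [hL]; exact zero_le
  -- MAIN CASE
  set Ep := ∫⁻ ω, edist (X ω) (Xh ω) ^ p ∂P with hEpdef
  set E := Ep.toReal with hEdef
  have hEpos : 0 < E := ENNReal.toReal_pos hE0 hEtop
  have hEeq : Ep = ENNReal.ofReal E := (ENNReal.ofReal_toReal hEtop).symm
  set e := E ^ (1/(p+1)) / (2*K₀) with hedef
  have he : 0 < e := by rw [hedef]; positivity
  -- replace f by f' on the left-hand side
  have hLfp : ∫⁻ ω, ENNReal.ofReal |f (X ω) - f (Xh ω)| ^ q ∂P
      = ∫⁻ ω, ENNReal.ofReal |f' (X ω) - f' (Xh ω)| ^ q ∂P := by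
    refine lintegral_congr_ae ?_
    filter_upwards [hTX _ hff', hTXh _ hff'] with ω h1 h2
    rw [h1, h2]
  rw [hLfp]
  -- Step A : reduce the exponent q to 1
  set I₁ := ∫⁻ ω, ENNReal.ofReal |f' (X ω) - f' (Xh ω)| ∂P with hI₁def
  have hstepA : ∫⁻ ω, ENNReal.ofReal |f' (X ω) - f' (Xh ω)| ^ q ∂P
      ≤ ENNReal.ofReal ((2*Mr)^(q-1)) * I₁ := by
    have hptw : ∀ᵐ ω ∂P, ENNReal.ofReal |f' (X ω) - f' (Xh ω)| ^ q
        ≤ ENNReal.ofReal ((2*Mr)^(q-1)) * ENNReal.ofReal |f' (X ω) - f' (Xh ω)| := by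
      filter_upwards [hTX _ hMae, hTXh _ hMae] with ω h1 h2
      set a := ENNReal.ofReal |f' (X ω) - f' (Xh ω)| with hadef
      have hab : a ≤ ENNReal.ofReal (2*Mr) :=
        ENNReal.ofReal_le_ofReal ((abs_sub _ _).trans (by linarith))
      rcases eq_or_ne a 0 with h | h
      · rw [h, ENNReal.zero_rpow_of_pos hq0, mul_zero]
      · have hsplit : a ^ q = a ^ (q-1) * a := by
          nth_rewrite 1 [show q = (q-1) + 1 by ring]
          rw [ENNReal.rpow_add _ _ h ENNReal.ofReal_ne_top, ENNReal.rpow_one]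
        rw [hsplit]
        refine mul_le_mul_left ?_ a
        have h4 := ENNReal.rpow_le_rpow hab (by linarith : (0:ℝ) ≤ q - 1)
        exact h4.trans_eq (ENNReal.ofReal_rpow_of_pos (by linarith : (0:ℝ) < 2*Mr))
    calc ∫⁻ ω, ENNReal.ofReal |f' (X ω) - f' (Xh ω)| ^ q ∂P
        ≤ ∫⁻ ω, ENNReal.ofReal ((2*Mr)^(q-1)) * ENNReal.ofReal |f' (X ω) - f' (Xh ω)| ∂P :=
        lintegral_mono_ae hptw
    _ = _ := lintegral_const_mul' _ _ ENNReal.ofReal_ne_top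
  refine hstepA.trans ?_
  rw [mul_assoc]
  refine mul_le_mul_right ?_ _
  -- Step B : layer-cake representation
  set D : Ω → ℝ → ℝ≥0∞ := fun ω t =>
    ENNReal.ofReal |(if t < f' (X ω) then (1:ℝ) else 0) - (if t < f' (Xh ω) then (1:ℝ) else 0)|
    with hDdef
  have hDm : Measurable (Function.uncurry D) := by
    apply Measurable.ennreal_ofReal
    apply Measurable.abs
    apply Measurable.sub
    · exact Measurable.ite
        (measurableSet_lt measurable_snd (hf'm.comp (hX.comp measurable_fst)))
        measurable_const measurable_const
    · exact Measurable.ite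
        (measurableSet_lt measurable_snd (hf'm.comp (hXh.comp measurable_fst)))
        measurable_const measurable_const
  have hI1eq : I₁ = ∫⁻ t, ∫⁻ ω, D ω t ∂P ∂(volume : Measure ℝ) := by
    have h1 : I₁ = ∫⁻ ω, ∫⁻ t, D ω t ∂(volume : Measure ℝ) ∂P :=
      lintegral_congr fun ω => (layercake _ _).symm
    rw [h1]
    exact lintegral_lintegral_swap hDm.aemeasurable
  set Pd := P {ω | e ≤ dist (X ω) (Xh ω)} with hPddef
  set cX := essSup pX volume with hcX
  set cY := essSup pXh volume with hcY
  set c₁ := ENNReal.ofReal A₁ * (cX + cY) * ENNReal.ofReal (2*K₀*e) with hc₁def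
  have hc₁top : c₁ ≠ ⊤ := by
    refine ENNReal.mul_ne_top (ENNReal.mul_ne_top ENNReal.ofReal_ne_top ?_) ENNReal.ofReal_ne_top
    exact ENNReal.add_ne_top.2 ⟨hbX, hbXh⟩
  -- transfer the pointwise BV estimate to f'
  have hpt' : ∀ᵐ t ∂(volume : Measure ℝ), IsFiniteMeasure (DI t) ∧
      ∀ᵐ x ∂(volume : Measure (Euc d)), ∀ᵐ y ∂(volume : Measure (Euc d)),
        ENNReal.ofReal |(if t < f' x then (1:ℝ) else 0) - (if t < f' y then (1:ℝ) else 0)|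
          ≤ ENNReal.ofReal (K₀ * dist x y)
            * (maximalR (2 * dist x y) (DI t) x + maximalR (2 * dist x y) (DI t) y) := by
    filter_upwards [hpt] with t ht
    refine ⟨ht.1, ?_⟩
    filter_upwards [ht.2, hff'] with x hx hfx
    filter_upwards [hx, hff'] with y hxy hfy
    simpa [Set.indicator_apply, Set.mem_setOf_eq, hfx, hfy] using hxy
  -- main per-level estimate
  have hkey : ∀ᵐ t ∂(volume : Measure ℝ), (∫⁻ ω, D ω t ∂P)
      ≤ c₁ * DI t Set.univ + (Icc (-Mr) Mr).indicator (fun _ => Pd) t := by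
    filter_upwards [hpt'] with t ht
    obtain ⟨hfin, hptt⟩ := ht
    by_cases htI : t ∈ Icc (-Mr) Mr
    · rw [Set.indicator_of_mem htI]
      obtain ⟨N, hN0, hNprop⟩ := keyLemma (DI t) (fun x => if t < f' x then (1:ℝ) else 0)
        (fun x => by by_cases hc : t < f' x <;> simp [hc]) K₀ e hK₀ he hptt
      set S := toMeasurable volume
        {z | ENNReal.ofReal (1/(2*K₀*e)) < maximal (DI t) z} with hSdef
      have hSm : MeasurableSet S := measurableSet_toMeasurable _ _
      have hXN : ∀ᵐ ω ∂P, X ω ∉ N := hTX _ (measure_eq_zero_iff_ae_notMem.1 hN0)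
      have hXhN : ∀ᵐ ω ∂P, Xh ω ∉ N := hTXh _ (measure_eq_zero_iff_ae_notMem.1 hN0)
      have hD1 : ∀ ω, D ω t ≤ 1 := by
        intro ω
        have habs : |(if t < f' (X ω) then (1:ℝ) else 0) - (if t < f' (Xh ω) then 1 else 0)|
            ≤ 1 := by
          by_cases u1 : t < f' (X ω) <;> by_cases u2 : t < f' (Xh ω) <;> simp [u1, u2]
        calc D ω t ≤ ENNReal.ofReal 1 := ENNReal.ofReal_le_ofReal habs
        _ = 1 := ENNReal.ofReal_one
      have hbd : ∀ᵐ ω ∂P, D ω t ≤ S.indicator (fun _ => (1:ℝ≥0∞)) (X ω)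
          + S.indicator (fun _ => (1:ℝ≥0∞)) (Xh ω)
          + {ω' | e ≤ dist (X ω') (Xh ω')}.indicator (fun _ => (1:ℝ≥0∞)) ω := by
        filter_upwards [hXN, hXhN] with ω hx hy
        by_cases hde : e ≤ dist (X ω) (Xh ω)
        · refine (hD1 ω).trans ?_
          rw [Set.indicator_of_mem (show ω ∈ {ω' | e ≤ dist (X ω') (Xh ω')} from hde)]
          exact le_add_left le_rfl
        · push_neg at hde
          by_cases hxs : X ω ∈ S
          · refine (hD1 ω).trans ?_
            rw [Set.indicator_of_mem hxs]
            exact le_add_right le_self_add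
          by_cases hys : Xh ω ∈ S
          · refine (hD1 ω).trans ?_
            rw [Set.indicator_of_mem hys]
            exact le_add_right (le_add_left le_rfl)
          · have hgg := hNprop (X ω) (Xh ω) hx hy hxs hys hde
            have hz : D ω t = 0 := by
              show ENNReal.ofReal |(if t < f' (X ω) then (1:ℝ) else 0)
                - (if t < f' (Xh ω) then (1:ℝ) else 0)| = 0
              have hgg' : (if t < f' (X ω) then (1:ℝ) else 0)
                  = (if t < f' (Xh ω) then (1:ℝ) else 0) := hgg
              rw [hgg', sub_self, abs_zero, ENNReal.ofReal_zero]
            rw [hz]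
            exact zero_le
      have hm2 : Measurable fun ω => S.indicator (fun _ => (1:ℝ≥0∞)) (Xh ω) :=
        (measurable_const.indicator hSm).comp hXh
      have hmE : MeasurableSet {ω' | e ≤ dist (X ω') (Xh ω')} :=
        measurableSet_le measurable_const (hX.dist hXh)
      have hlaw : ∀ (Y : Ω → Euc d), Measurable Y → ∀ (pY : Euc d → ℝ≥0∞),
          P.map Y = volume.withDensity pY →
          ∫⁻ ω, S.indicator (fun _ => (1:ℝ≥0∞)) (Y ω) ∂P ≤ essSup pY volume * volume S := by
        intro Y hY pY hdY
        rw [← lintegral_map (measurable_const.indicator hSm) hY, hdY,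
          lintegral_indicator_const hSm, one_mul, withDensity_apply _ hSm]
        calc ∫⁻ x in S, pY x ∂volume
            ≤ ∫⁻ _x in S, essSup pY volume ∂volume :=
            lintegral_mono_ae (ae_restrict_of_ae (ae_le_essSup))
        _ = essSup pY volume * volume S := setLIntegral_const _ _
      have hvolS : volume S
          ≤ ENNReal.ofReal A₁ * DI t Set.univ / ENNReal.ofReal (1/(2*K₀*e)) := by
        rw [hSdef, measure_toMeasurable]
        exact hweak (DI t) hfin _ (ENNReal.ofReal_pos.2 (by positivity)).ne'
      calc ∫⁻ ω, D ω t ∂P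
          ≤ ∫⁻ ω, (S.indicator (fun _ => (1:ℝ≥0∞)) (X ω)
            + S.indicator (fun _ => (1:ℝ≥0∞)) (Xh ω)
            + {ω' | e ≤ dist (X ω') (Xh ω')}.indicator (fun _ => (1:ℝ≥0∞)) ω) ∂P :=
          lintegral_mono_ae hbd
      _ = (∫⁻ ω, S.indicator (fun _ => (1:ℝ≥0∞)) (X ω) ∂P)
            + (∫⁻ ω, S.indicator (fun _ => (1:ℝ≥0∞)) (Xh ω) ∂P)
            + P {ω' | e ≤ dist (X ω') (Xh ω')} := by
          rw [lintegral_add_right' _ ((measurable_const.indicator hmE).aemeasurable),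
            lintegral_add_right' _ hm2.aemeasurable, lintegral_indicator_const hmE, one_mul]
      _ ≤ cX * volume S + cY * volume S + Pd :=
          add_le_add (add_le_add (hlaw X hX pX hdX) (hlaw Xh hXh pXh hdXh)) le_rfl
      _ = (cX + cY) * volume S + Pd := by ring
      _ ≤ (cX + cY) * (ENNReal.ofReal A₁ * DI t Set.univ / ENNReal.ofReal (1/(2*K₀*e))) + Pd :=
          add_le_add_left (mul_le_mul_right hvolS _) _
      _ = c₁ * DI t Set.univ + Pd := by
          rw [hc₁def, div_eq_mul_inv,
            ← ENNReal.ofReal_inv_of_pos (by positivity : (0:ℝ) < 1/(2*K₀*e)),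
            show (1/(2*K₀*e))⁻¹ = 2*K₀*e by rw [one_div, inv_inv]]
          ring
    · rw [Set.indicator_of_notMem htI, add_zero]
      have ht' : t < -Mr ∨ Mr < t := by
        by_contra hcon
        push_neg at hcon
        exact htI (Set.mem_Icc.2 ⟨hcon.1, hcon.2⟩)
      have hzero : ∀ᵐ ω ∂P, D ω t = 0 := by
        filter_upwards [hTX _ hMae, hTXh _ hMae] with ω h1 h2
        have e1 := abs_le.1 h1
        have e2 := abs_le.1 h2
        show ENNReal.ofReal |(if t < f' (X ω) then (1:ℝ) else 0)
          - (if t < f' (Xh ω) then (1:ℝ) else 0)| = 0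
        rcases ht' with h | h
        · have c1 : t < f' (X ω) := by linarith [e1.1]
          have c2 : t < f' (Xh ω) := by linarith [e2.1]
          simp [c1, c2]
        · have c1 : ¬ t < f' (X ω) := not_lt.2 (by linarith [e1.2])
          have c2 : ¬ t < f' (Xh ω) := not_lt.2 (by linarith [e2.2])
          simp [c1, c2]
      calc ∫⁻ ω, D ω t ∂P = 0 := by rw [lintegral_congr_ae hzero, lintegral_zero]
      _ ≤ c₁ * DI t Set.univ := zero_le
  -- integrate the per-level estimate
  have hfinal : ∫⁻ t, ∫⁻ ω, D ω t ∂P ∂(volume : Measure ℝ)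
      ≤ c₁ * Df Set.univ + Pd * ENNReal.ofReal (2*Mr) := by
    calc ∫⁻ t, ∫⁻ ω, D ω t ∂P ∂(volume : Measure ℝ)
        ≤ ∫⁻ t, (c₁ * DI t Set.univ + (Icc (-Mr) Mr).indicator (fun _ => Pd) t)
          ∂(volume : Measure ℝ) := lintegral_mono_ae hkey
    _ = (∫⁻ t, c₁ * DI t Set.univ ∂(volume : Measure ℝ))
          + ∫⁻ t, (Icc (-Mr) Mr).indicator (fun _ => Pd) t ∂(volume : Measure ℝ) :=
        lintegral_add_right' _ ((measurable_const.indicator measurableSet_Icc).aemeasurable)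
    _ = c₁ * Df Set.univ + Pd * ENNReal.ofReal (2*Mr) := by
        rw [lintegral_const_mul' _ _ hc₁top, hcoarea,
          lintegral_indicator_const measurableSet_Icc, Real.volume_Icc,
          show Mr - (-Mr) = 2*Mr by ring]
  -- Markov/Chebyshev
  have hne0 : ENNReal.ofReal (e^p) ≠ 0 := (ENNReal.ofReal_pos.2 (Real.rpow_pos_of_pos he p)).ne'
  have hMarkov : Pd ≤ Ep / ENNReal.ofReal (e^p) := by
    have hsub : {ω | e ≤ dist (X ω) (Xh ω)}
        ⊆ {ω | ENNReal.ofReal (e^p) ≤ edist (X ω) (Xh ω) ^ p} := by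
      intro ω hω
      have h1 : ENNReal.ofReal e ≤ edist (X ω) (Xh ω) := by
        rw [edist_dist]; exact ENNReal.ofReal_le_ofReal hω
      have h2 := ENNReal.rpow_le_rpow h1 hp.le
      rw [ENNReal.ofReal_rpow_of_pos he] at h2
      exact h2
    have h2 := mul_meas_ge_le_lintegral₀ (μ := P) hedm.aemeasurable (ENNReal.ofReal (e^p))
    rw [ENNReal.le_div_iff_mul_le (Or.inl hne0) (Or.inl ENNReal.ofReal_ne_top)]
    calc Pd * ENNReal.ofReal (e^p)
        ≤ P {ω | ENNReal.ofReal (e^p) ≤ edist (X ω) (Xh ω) ^ p} * ENNReal.ofReal (e^p) :=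
        mul_le_mul_left (measure_mono hsub) _
    _ = ENNReal.ofReal (e^p) * P {ω | ENNReal.ofReal (e^p) ≤ edist (X ω) (Xh ω) ^ p} :=
        mul_comm _ _
    _ ≤ Ep := h2
  -- numeric identities
  have h2Ke : 2*K₀*e = E^(1/(p+1)) := by rw [hedef]; field_simp
  have hEpr : Ep ^ (1/(p+1)) = ENNReal.ofReal (E^(1/(p+1))) := by
    rw [hEeq, ENNReal.ofReal_rpow_of_pos hEpos]
  have hterm2real : E / e^p * (2*Mr) = 2^(p+1) * K₀^p * Mr * E^(1/(p+1)) := by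
    have h2K : (0:ℝ) < 2*K₀ := by linarith
    have hA : (0:ℝ) < E^(1/(p+1)) := Real.rpow_pos_of_pos hEpos _
    have hep : e^p = E^(p/(p+1)) / (2*K₀)^p := by
      rw [hedef, Real.div_rpow hA.le h2K.le]
      congr 1
      rw [← Real.rpow_mul hEpos.le]
      congr 1
      field_simp
    have hEdiv : E / E^(p/(p+1)) = E^(1/(p+1)) := by
      nth_rewrite 1 [← Real.rpow_one E]
      rw [← Real.rpow_sub hEpos]
      congr 1
      field_simp
      ring
    have hfrac : E / (E^(p/(p+1)) / (2*K₀)^p) = E^(1/(p+1)) * (2*K₀)^p := by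
      rw [div_div_eq_mul_div, show E * (2*K₀)^p / E^(p/(p+1))
        = E / E^(p/(p+1)) * (2*K₀)^p by ring, hEdiv]
    rw [hep, hfrac, Real.mul_rpow (by norm_num : (0:ℝ) ≤ 2) hK₀.le,
      show (2:ℝ)^(p+1) = 2^p * 2 by
        rw [Real.rpow_add (by norm_num : (0:ℝ) < 2), Real.rpow_one]]
    ring
  -- final chain
  calc I₁ = ∫⁻ t, ∫⁻ ω, D ω t ∂P ∂(volume : Measure ℝ) := hI1eq
  _ ≤ c₁ * Df Set.univ + Pd * ENNReal.ofReal (2*Mr) := hfinal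
  _ ≤ c₁ * Df Set.univ + (Ep / ENNReal.ofReal (e^p)) * ENNReal.ofReal (2*Mr) :=
      add_le_add_right (mul_le_mul_left hMarkov _) _
  _ = ENNReal.ofReal A₁ * (cX + cY) * Df Set.univ * Ep^(1/(p+1))
        + ENNReal.ofReal (2^(p+1) * K₀^p * Mr) * Ep^(1/(p+1)) := by
      congr 1
      · rw [hc₁def, h2Ke, hEpr]
        ring
      · rw [hEeq, ← ENNReal.ofReal_div_of_pos (Real.rpow_pos_of_pos he p),
          ← ENNReal.ofReal_mul (by positivity : (0:ℝ) ≤ E / e^p), hterm2real,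
          ENNReal.ofReal_rpow_of_pos hEpos,
          ← ENNReal.ofReal_mul (by positivity)]
  _ = (ENNReal.ofReal (2^(p+1) * K₀^p * Mr)
        + ENNReal.ofReal A₁ * (cX + cY) * Df Set.univ) * Ep^(1/(p+1)) := by ring
end
end

section
/- Let s ∈ (0,1), p ∈ [1,∞), and f ∈ W^{s,p}(ℝ^d). Then there exist a constant K₀(s,p) > 0 and a Lebesgue-null set N ⊂ ℝ^d such that for all x, y ∈ ℝ^d \ N, |f(x) − f(y)| ≤ K₀(s,p) |x − y|^s (M_{2|x−y|}(G_{s,p}f)(x) + M_{2|x−y|}(G_{s,p}f)(y)), where G_{s,p}f(x) = (∫_{ℝ^d} |f(x)−f(y)|^p / |x−y|^{d+sp} dy)^{1/p}. -/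
open MeasureTheory Metric Filter Set
open scoped ENNReal Topology

noncomputable section

/-- The Gagliardo operator `G_{s,p} f (x) = (∫ |f x − f y|^p / |x−y|^{d+sp} dy)^{1/p}`. -/
def Gsp (d : ℕ) (s p : ℝ) (f : Euc d → ℝ) (x : Euc d) : ℝ≥0∞ :=
  (∫⁻ y, ENNReal.ofReal (|f x - f y| ^ p / dist x y ^ ((d : ℝ) + s * p)) ∂volume) ^ (1 / p)

lemma hold_aux {α : Type*} [MeasurableSpace α] {μ : Measure α} {h : α → ℝ≥0∞}
    (hh : AEMeasurable h μ) {p : ℝ} (hp : 1 ≤ p) :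
    ∫⁻ a, (h a) ^ (1/p) ∂μ ≤ (∫⁻ a, h a ∂μ) ^ (1/p) * (μ Set.univ) ^ (1 - 1/p) := by
  rcases eq_or_lt_of_le hp with hp1 | hp1
  · subst hp1
    simp
  · have hpq : p.HolderConjugate (Real.conjExponent p) := Real.HolderConjugate.conjExponent hp1
    have hq : 1 - 1/p = 1 / Real.conjExponent p := by
      have h2 := hpq.one_sub_inv
      rw [one_div, one_div, ← h2]
    calc ∫⁻ a, (h a) ^ (1/p) ∂μ = ∫⁻ a, (h a) ^ (1/p) * (1:ℝ≥0∞) ∂μ := by simp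
      _ ≤ (∫⁻ a, ((h a)^(1/p)) ^ p ∂μ) ^ (1/p) * (∫⁻ a, (1:ℝ≥0∞) ^ (Real.conjExponent p) ∂μ) ^ (1/Real.conjExponent p) :=
          ENNReal.lintegral_mul_le_Lp_mul_Lq μ hpq (hh.pow_const _) aemeasurable_const
      _ = (∫⁻ a, h a ∂μ) ^ (1/p) * (μ Set.univ) ^ (1 - 1/p) := by
          rw [hq]
          congr 1
          · congr 1
            refine lintegral_congr fun a => ?_
            rw [← ENNReal.rpow_mul, one_div, inv_mul_cancel₀ (by linarith : p ≠ 0), ENNReal.rpow_one]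
          · simp

lemma ball_bound {d : ℕ} {s p : ℝ} (hs0 : 0 < s) (hp : 1 ≤ p) {f : Euc d → ℝ}
    (hf : AEMeasurable f (volume : Measure (Euc d))) {x z : Euc d} {r : ℝ} (hr : 0 < r)
    (hz : z ∈ closedBall x r) (hsing : volume ({z} : Set (Euc d)) = 0) :
    ∫⁻ w in closedBall x r, ENNReal.ofReal |f z - f w| ∂volume
      ≤ ENNReal.ofReal ((2*r) ^ (((d:ℝ) + s*p)/p)) * ((volume (closedBall x r)) ^ (1 - 1/p)
        * Gsp d s p f z) := by
  have hp0 : 0 < p := lt_of_lt_of_le one_pos hp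
  set c : ℝ := (d:ℝ) + s * p with hc
  have hc0 : 0 ≤ c := by positivity
  set B := closedBall x r
  set g : Euc d → ℝ≥0∞ := fun w => ENNReal.ofReal (|f z - f w| ^ p / dist z w ^ c) with hgdef
  have hg : AEMeasurable g (volume.restrict B) := by
    apply AEMeasurable.ennreal_ofReal
    exact ((((aemeasurable_const.sub hf.restrict).norm).pow_const p).div
      (((measurable_const.dist measurable_id).pow_const c).aemeasurable))
  have hae : ∀ᵐ w ∂(volume.restrict B),
      ENNReal.ofReal |f z - f w| ≤ g w ^ (1/p) * ENNReal.ofReal ((2*r) ^ (c/p)) := by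
    have h0 : ∀ᵐ w ∂(volume.restrict B), w ≠ z := by
      apply ae_restrict_of_ae
      rw [ae_iff]
      simpa using hsing
    filter_upwards [h0, ae_restrict_mem measurableSet_closedBall] with w hw hwB
    have hρ : 0 < dist z w := dist_pos.2 (Ne.symm hw)
    have hρ2r : dist z w ≤ 2 * r := by
      have := dist_triangle z x w
      have h1 : dist z x ≤ r := mem_closedBall.1 hz
      have h2 : dist x w ≤ r := (mem_closedBall'.1 hwB)
      linarith
    have key : |f z - f w| ≤ (|f z - f w| ^ p / dist z w ^ c) ^ (1/p) * (2*r) ^ (c/p) := by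
      have h1 : (|f z - f w| ^ p / dist z w ^ c) ^ (1/p)
          = |f z - f w| / dist z w ^ (c/p) := by
        rw [Real.div_rpow (by positivity) (by positivity), ← Real.rpow_mul (abs_nonneg _),
          mul_one_div, div_self hp0.ne', Real.rpow_one, ← Real.rpow_mul hρ.le, mul_one_div]
      rw [h1]
      have h2 : dist z w ^ (c/p) ≤ (2*r) ^ (c/p) :=
        Real.rpow_le_rpow dist_nonneg hρ2r (by positivity)
      calc |f z - f w| = |f z - f w| / dist z w ^ (c/p) * dist z w ^ (c/p) := by
            field_simp
        _ ≤ |f z - f w| / dist z w ^ (c/p) * (2*r) ^ (c/p) := by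
            apply mul_le_mul_of_nonneg_left h2 (by positivity)
    calc ENNReal.ofReal |f z - f w|
        ≤ ENNReal.ofReal ((|f z - f w| ^ p / dist z w ^ c) ^ (1/p) * (2*r) ^ (c/p)) :=
          ENNReal.ofReal_le_ofReal key
      _ = g w ^ (1/p) * ENNReal.ofReal ((2*r) ^ (c/p)) := by
          rw [ENNReal.ofReal_mul (by positivity), ENNReal.ofReal_rpow_of_nonneg (by positivity) (by positivity)]
  calc ∫⁻ w in B, ENNReal.ofReal |f z - f w| ∂volume
      ≤ ∫⁻ w in B, g w ^ (1/p) * ENNReal.ofReal ((2*r) ^ (c/p)) ∂volume := lintegral_mono_ae hae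
    _ = ENNReal.ofReal ((2*r) ^ (c/p)) * ∫⁻ w in B, g w ^ (1/p) ∂volume := by
        simp_rw [mul_comm]
        exact lintegral_const_mul'' _ (hg.pow_const _)
    _ ≤ ENNReal.ofReal ((2*r) ^ (c/p)) * ((∫⁻ w in B, g w ∂volume) ^ (1/p)
          * ((volume.restrict B) Set.univ) ^ (1 - 1/p)) := by
        gcongr
        exact hold_aux hg hp
    _ ≤ ENNReal.ofReal ((2*r) ^ (c/p)) * ((volume B) ^ (1 - 1/p) * Gsp d s p f z) := by
        rw [Measure.restrict_apply_univ]
        rw [mul_comm ((∫⁻ w in B, g w ∂volume) ^ (1/p))]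
        gcongr
        have h3 : Gsp d s p f z = (∫⁻ w, g w ∂volume) ^ (1/p) := rfl
        rw [h3]
        exact ENNReal.rpow_le_rpow (setLIntegral_le_lintegral _ _) (by positivity)
    _ = ENNReal.ofReal ((2*r) ^ (c/p)) * ((volume B) ^ (1 - 1/p) * Gsp d s p f z) := rfl
  -- fix exponent form c/p vs ((d:ℝ)+s*p)/p : same by hc

/-- Pointwise maximal-function estimate for fractional Sobolev functions (Lemma 2.24):
for `f ∈ W^{s,p}(ℝ^d)` there are `K₀(s,p) > 0` and a Lebesgue-null set `N` with
`|f x − f y| ≤ K₀(s,p) |x−y|^s (M_{2|x−y|}(G_{s,p}f)(x) + M_{2|x−y|}(G_{s,p}f)(y))`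
for all `x, y ∉ N`. -/
theorem stmt_3 {d : ℕ} (s p : ℝ) (hs0 : 0 < s) (hs1 : s < 1) (hp : 1 ≤ p)
    (f : Euc d → ℝ) (hfLp : MemLp f (ENNReal.ofReal p) volume)
    (hfW : ∫⁻ x, Gsp d s p f x ^ p ∂volume ≠ ∞) :
    ∃ K₀ : ℝ, 0 < K₀ ∧ ∃ N : Set (Euc d), volume N = 0 ∧
      ∀ x ∉ N, ∀ y ∉ N,
        ENNReal.ofReal |f x - f y|
          ≤ ENNReal.ofReal (K₀ * dist x y ^ s)
            * (maximalR (2 * dist x y) (volume.withDensity (Gsp d s p f)) x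
              + maximalR (2 * dist x y) (volume.withDensity (Gsp d s p f)) y) := by
  have hp0 : 0 < p := lt_of_lt_of_le one_pos hp
  set G := Gsp d s p f with hGdef
  set ρ := volume.withDensity G with hρdef
  have hsm := hfLp.1
  set g : Euc d → ℝ := hsm.mk f with hgdef
  have hgmeas : Measurable g := hsm.stronglyMeasurable_mk.measurable
  have hfg : f =ᵐ[volume] g := hsm.ae_eq_mk
  have hf : AEMeasurable f volume := hsm.aemeasurable
  -- G is a.e. equal to the measurable function Gsp d s p g
  have hGmeas' : Measurable (Gsp d s p g) := by
    apply Measurable.pow_const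
    apply Measurable.lintegral_prod_right' (f := fun q : Euc d × Euc d =>
      ENNReal.ofReal (|g q.1 - g q.2| ^ p / dist q.1 q.2 ^ ((d : ℝ) + s * p)))
    apply Measurable.ennreal_ofReal
    exact (((hgmeas.comp measurable_fst).sub (hgmeas.comp measurable_snd)).norm.pow_const p).div
      (measurable_dist.pow_const _)
  have hGG : G =ᵐ[volume] Gsp d s p g := by
    filter_upwards [hfg] with a ha
    rw [hGdef]
    unfold Gsp
    congr 1
    apply lintegral_congr_ae
    filter_upwards [hfg] with w hw
    rw [ha, hw]
  have hGaem : AEMeasurable G volume := hGmeas'.aemeasurable.congr hGG.symm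
  -- G^p has finite integral; a.e.-measurability
  have hGp_aem : AEMeasurable (fun w => G w ^ p) volume := hGaem.pow_const _
  -- ρ is locally finite
  have hloc : IsLocallyFiniteMeasure ρ := by
    constructor
    intro a
    refine ⟨closedBall a 1, closedBall_mem_nhds a one_pos, ?_⟩
    rw [hρdef, withDensity_apply _ measurableSet_closedBall]
    have h1 : ∫⁻ w in closedBall a 1, G w ∂volume
        = ∫⁻ w in closedBall a 1, (G w ^ p) ^ (1/p) ∂volume := by
      refine lintegral_congr fun w => ?_
      rw [← ENNReal.rpow_mul, mul_one_div, div_self hp0.ne', ENNReal.rpow_one]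
    rw [h1]
    calc ∫⁻ w in closedBall a 1, (G w ^ p) ^ (1/p) ∂volume
        ≤ (∫⁻ w in closedBall a 1, G w ^ p ∂volume) ^ (1/p)
            * ((volume.restrict (closedBall a 1)) Set.univ) ^ (1 - 1/p) :=
          hold_aux hGp_aem.restrict hp
      _ < ∞ := by
          apply ENNReal.mul_lt_top
          · refine ENNReal.rpow_lt_top_of_nonneg (by positivity) ?_
            exact ((setLIntegral_le_lintegral _ _).trans_lt hfW.lt_top).ne
          · refine ENNReal.rpow_lt_top_of_nonneg ?_ ?_
            · simp only [sub_nonneg]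
              rw [div_le_one hp0]
              linarith
            · rw [Measure.restrict_apply_univ]
              exact measure_closedBall_lt_top.ne
  -- Lebesgue differentiation
  have hrn : ρ.rnDeriv volume =ᵐ[volume] G :=
    Measure.rnDeriv_withDensity₀ volume hGaem
  have hdiff := Besicovitch.ae_tendsto_rnDeriv ρ volume
  set S : Set (Euc d) := {z | Tendsto (fun t => ρ (closedBall z t) / volume (closedBall z t))
    (𝓝[>] 0) (𝓝 (G z))} with hSdef
  have hS_ae : ∀ᵐ z ∂(volume : Measure (Euc d)), z ∈ S := by
    filter_upwards [hdiff, hrn] with z hz h2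
    rw [hSdef, mem_setOf_eq, ← h2]
    exact hz
  have hNS : volume Sᶜ = 0 := by
    apply compl_mem_ae_iff.mp
    filter_upwards [hS_ae] with z hz
    simpa using hz
  set κ : ℝ≥0∞ := volume (ball (0 : Euc d) 1) with hκdef
  have hκ0 : κ ≠ 0 := (measure_ball_pos volume 0 one_pos).ne'
  have hκtop : κ ≠ ∞ := measure_ball_lt_top.ne
  have hκt : 0 < κ.toReal := ENNReal.toReal_pos hκ0 hκtop
  refine ⟨(2:ℝ) ^ (((d:ℝ) + s*p)/p) * κ.toReal ^ (-(1/p)), by positivity, Sᶜ, hNS, ?_⟩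
  intro x hx y hy
  have hxS : x ∈ S := by simpa using hx
  have hyS : y ∈ S := by simpa using hy
  rcases eq_or_ne x y with rfl | hxy
  · simp
  have hr : 0 < dist x y := dist_pos.2 hxy
  set r := dist x y with hrdef
  haveI : Nontrivial (Euc d) := ⟨⟨x, y, hxy⟩⟩
  have hsing : ∀ z : Euc d, volume ({z} : Set (Euc d)) = 0 := fun z => measure_singleton z
  set B := closedBall x r with hBdef
  set V := volume B with hVdef
  have hV0 : V ≠ 0 := (measure_closedBall_pos volume x hr).ne'
  have hVtop : V ≠ ∞ := measure_closedBall_lt_top.ne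
  have hxB : x ∈ B := mem_closedBall_self hr.le
  have hyB : y ∈ B := by rw [hBdef, mem_closedBall, dist_comm]
  set D := ENNReal.ofReal ((2*r) ^ (((d:ℝ) + s*p)/p)) with hDdef
  -- Step 1: averaging over the ball B
  have hsplit : ENNReal.ofReal |f x - f y| * V
      ≤ D * (V ^ (1 - 1/p) * G x) + D * (V ^ (1 - 1/p) * G y) := by
    have h0 : ENNReal.ofReal |f x - f y| * V
        = ∫⁻ _ in B, ENNReal.ofReal |f x - f y| ∂volume := by
      rw [setLIntegral_const]
    rw [h0]
    calc ∫⁻ _ in B, ENNReal.ofReal |f x - f y| ∂volume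
        ≤ ∫⁻ w in B, (ENNReal.ofReal |f x - f w| + ENNReal.ofReal |f w - f y|) ∂volume := by
          refine lintegral_mono fun w => ?_
          exact le_trans (ENNReal.ofReal_le_ofReal (abs_sub_le _ _ _)) ENNReal.ofReal_add_le
      _ = (∫⁻ w in B, ENNReal.ofReal |f x - f w| ∂volume)
          + ∫⁻ w in B, ENNReal.ofReal |f w - f y| ∂volume := by
          apply lintegral_add_left'
          exact ((aemeasurable_const.sub hf.restrict).norm).ennreal_ofReal
      _ ≤ _ := by
          apply add_le_add
          · exact ball_bound hs0 hp hf hr hxB (hsing x)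
          · have hcong : (∫⁻ w in B, ENNReal.ofReal |f w - f y| ∂volume)
                = ∫⁻ w in B, ENNReal.ofReal |f y - f w| ∂volume :=
              lintegral_congr fun w => by rw [abs_sub_comm]
            rw [hcong]
            exact ball_bound hs0 hp hf hr hyB (hsing y)
  -- Step 2: divide by V
  have hdiv : ENNReal.ofReal |f x - f y| ≤ D * V ^ (1 - 1/p) * (G x + G y) / V := by
    rw [ENNReal.le_div_iff_mul_le (Or.inl hV0) (Or.inl hVtop)]
    refine hsplit.trans_eq ?_
    ring
  -- Step 3: the constant
  have hVeq : V = ENNReal.ofReal (r ^ d) * κ := by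
    rw [hVdef, hBdef, Measure.addHaar_closedBall volume x hr.le, hκdef,
      finrank_euclideanSpace_fin]
  have hpow : V ^ (1 - 1/p) / V = V ^ (-(1/p)) := by
    rw [div_eq_mul_inv, ← ENNReal.rpow_neg_one V, ← ENNReal.rpow_add _ _ hV0 hVtop]
    congr 1
    ring
  have hconst : D * V ^ (1 - 1/p) / V
      = ENNReal.ofReal ((2:ℝ) ^ (((d:ℝ)+s*p)/p) * κ.toReal ^ (-(1/p)) * r ^ s) := by
    rw [mul_div_assoc, hpow, hVeq,
      ENNReal.mul_rpow_of_ne_zero (ENNReal.ofReal_pos.2 (pow_pos hr d)).ne' hκ0,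
      ENNReal.ofReal_rpow_of_pos (pow_pos hr d)]
    have hκeq : κ ^ (-(1/p)) = ENNReal.ofReal (κ.toReal ^ (-(1/p))) := by
      rw [← ENNReal.ofReal_rpow_of_pos hκt, ENNReal.ofReal_toReal hκtop]
    rw [hκeq, hDdef, ← ENNReal.ofReal_mul (by positivity),
      ← ENNReal.ofReal_mul (by positivity)]
    congr 1
    rw [Real.mul_rpow (by norm_num) hr.le, ← Real.rpow_natCast r d, ← Real.rpow_mul hr.le]
    have hmul : r ^ (((d:ℝ)+s*p)/p) * r ^ ((d:ℝ) * -(1/p)) = r ^ s := by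
      rw [← Real.rpow_add hr]
      congr 1
      field_simp
      ring
    linear_combination (2:ℝ) ^ (((d:ℝ)+s*p)/p) * κ.toReal ^ (-(1/p)) * hmul
  -- Step 4: maximal function bounds
  have hmax : ∀ z ∈ S, G z ≤ maximalR (2*r) ρ z := by
    intro z hz
    refine le_of_tendsto hz ?_
    filter_upwards [Ioc_mem_nhdsGT_of_mem
      (show (0:ℝ) ∈ Set.Ico (0:ℝ) (2*r) from Set.mem_Ico.2 ⟨le_refl (0:ℝ), by positivity⟩)]
      with t ht
    exact le_iSup₂ (f := fun t (_ : t ∈ Set.Ioc (0:ℝ) (2*r)) =>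
      ρ (closedBall z t) / volume (closedBall z t)) t ht
  calc ENNReal.ofReal |f x - f y| ≤ D * V ^ (1 - 1/p) * (G x + G y) / V := hdiv
    _ = (D * V ^ (1 - 1/p) / V) * (G x + G y) := by
        rw [div_eq_mul_inv (D * V ^ (1 - 1/p) * (G x + G y)) V,
          div_eq_mul_inv (D * V ^ (1 - 1/p)) V, mul_right_comm]
    _ = ENNReal.ofReal ((2:ℝ) ^ (((d:ℝ)+s*p)/p) * κ.toReal ^ (-(1/p)) * r ^ s) * (G x + G y) := by
        rw [hconst]
    _ ≤ _ := by
        rw [mul_assoc]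
        gcongr
        · exact hmax x hxS
        · exact hmax y hyS
end
end

section
/- Let s ∈ (0,1), p ∈ [1,∞), f ∈ W^{s,p}(ℝ^d), x ∈ ℝ^d and r > 0. Then the mean oscillation of f on the ball B(x,r) satisfies ⨍_{B(x,r)} |f(z) − (f)_{x,r}| dz ≤ C₀(s,p) r^s M_r(G_{s,p} f)(x), where (f)_{x,r} = ⨍_{B(x,r)} f, C₀(s,p) = 2^{(d+sp)/p} (Γ(d/2+1)/π^{d/2})^{1/p}, and G_{s,p}f(x) = (∫ |f(x)−f(y)|^p/|x−y|^{d+sp} dy)^{1/p}. -/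
open MeasureTheory Metric Filter Set
open scoped ENNReal Topology

noncomputable section

/-- Mean-oscillation estimate for fractional Sobolev functions (inequality (2.13)):
`⨍_{B(x,r)} |f − (f)_{x,r}| ≤ C₀(s,p) r^s M_r(G_{s,p} f)(x)` with
`C₀(s,p) = 2^{(d+sp)/p} (Γ(d/2+1)/π^{d/2})^{1/p}`. -/
theorem stmt_4 {d : ℕ} (s p : ℝ) (hs0 : 0 < s) (hs1 : s < 1) (hp : 1 ≤ p)
    (f : Euc d → ℝ) (hfLp : MemLp f (ENNReal.ofReal p) volume)
    (hfW : ∫⁻ x, Gsp d s p f x ^ p ∂volume ≠ ∞)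
    (x : Euc d) (r : ℝ) (hr : 0 < r) :
    ENNReal.ofReal
        (⨍ z in closedBall x r, |f z - ⨍ w in closedBall x r, f w ∂volume| ∂volume)
      ≤ ENNReal.ofReal
          ((2 : ℝ) ^ (((d : ℝ) + s * p) / p)
            * (Real.Gamma ((d : ℝ) / 2 + 1) / Real.pi ^ ((d : ℝ) / 2)) ^ (1 / p)
            * r ^ s)
        * maximalR r (volume.withDensity (Gsp d s p f)) x := by
  classical
  have hp_pos : (0 : ℝ) < p := lt_of_lt_of_le one_pos hp
  have hp0 : p ≠ 0 := hp_pos.ne'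
  set B := closedBall x r with hBdef
  set c := ⨍ w in B, f w ∂volume with hcdef
  rcases Nat.eq_zero_or_pos d with hd | hd
  · -- degenerate case d = 0 : the space is a singleton, LHS = 0
    subst hd
    have hsub : Subsingleton (Euc 0) := inferInstance
    have hfconst : f = fun _ => f x := funext fun z => congrArg f (Subsingleton.elim z x)
    have hBuniv : B = univ := eq_univ_of_forall fun z => by
      simp [hBdef, mem_closedBall, Subsingleton.elim z x, hr.le]
    have huniv : (volume : Measure (Euc 0)) univ = 1 := by
      rw [← Set.preimage_univ (f := (MeasurableEquiv.toLp 2 (Fin 0 → ℝ)).symm),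
        (EuclideanSpace.volume_preserving_symm_measurableEquiv_toLp (Fin 0)).measure_preimage
          MeasurableSet.univ.nullMeasurableSet]
      simp [MeasureTheory.volume_pi, Measure.pi_univ]
    have hc' : c = f x := by
      rw [hcdef, hBuniv]
      rw [show (fun w : Euc 0 => f w) = fun _ => f x from hfconst]
      exact setAverage_const (by simp [huniv]) (by simp [huniv]) _
    have : (fun z : Euc 0 => |f z - c|) = fun _ => (0 : ℝ) := by
      funext z
      rw [congrArg f (Subsingleton.elim z x), hc', sub_self, abs_zero]
    rw [this]
    simp only [average_zero]
    simp
  -- main case `1 ≤ d`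
  haveI : Nonempty (Fin d) := ⟨⟨0, hd⟩⟩
  haveI : Nontrivial (Euc d) := inferInstance
  set e : ℝ := (d : ℝ) + s * p with hedef
  have he_pos : 0 < e := by positivity
  set V := volume B with hVdef
  have hV0 : V ≠ 0 := by
    have := Metric.measure_ball_pos (volume : Measure (Euc d)) x hr
    exact fun h => absurd (measure_mono_null ball_subset_closedBall h) this.ne'
  have hVtop : V ≠ ∞ := measure_closedBall_lt_top.ne
  have hVr : 0 < V.toReal := ENNReal.toReal_pos hV0 hVtop
  have hmeasB : MeasurableSet B := measurableSet_closedBall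
  haveI hfin : IsFiniteMeasure (volume.restrict B) :=
    ⟨by rw [Measure.restrict_apply_univ]; exact lt_of_le_of_ne le_top hVtop⟩
  have hint : IntegrableOn f B volume :=
    (hfLp.restrict B).integrable (by simpa using ENNReal.one_le_ofReal.2 hp)
  have hofV : ENNReal.ofReal (V.toReal)⁻¹ = V⁻¹ := by
    rw [ENNReal.ofReal_inv_of_pos hVr, ENNReal.ofReal_toReal hVtop]
  -- Step A : rewrite LHS as a lower integral
  have hintc : IntegrableOn (fun z => |f z - c|) B volume :=
    (hint.sub (integrableOn_const hVtop)).abs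
  have stepA : ENNReal.ofReal (⨍ z in B, |f z - c| ∂volume)
      = V⁻¹ * ∫⁻ z in B, ENNReal.ofReal |f z - c| ∂volume := by
    rw [setAverage_eq, measureReal_def, ← hVdef, smul_eq_mul, ENNReal.ofReal_mul (by positivity),
      ofReal_integral_eq_lintegral_ofReal hintc
        (Filter.Eventually.of_forall fun z => abs_nonneg _), hofV]
  -- Step B : |f z - c| ≤ ⨍_B |f z - f y| dy, for every z
  have stepB : ∀ z : Euc d, ENNReal.ofReal |f z - c|
      ≤ V⁻¹ * ∫⁻ y in B, ENNReal.ofReal |f z - f y| ∂volume := by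
    intro z
    have hsub : IntegrableOn (fun y => f z - f y) B volume :=
      (integrableOn_const hVtop).sub hint
    have hR : |f z - c| ≤ (V.toReal)⁻¹ * ∫ y in B, |f z - f y| ∂volume := by
      have h1 : f z - c = (V.toReal)⁻¹ * ∫ y in B, (f z - f y) ∂volume := by
        rw [integral_sub (integrableOn_const (C := f z) hVtop) hint,
          setIntegral_const, hcdef, setAverage_eq, smul_eq_mul, smul_eq_mul, mul_sub,
          measureReal_def, ← hVdef, inv_mul_cancel_left₀ hVr.ne']
      rw [h1, abs_mul, abs_inv, abs_of_pos hVr]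
      gcongr
      calc |∫ y in B, (f z - f y) ∂volume| ≤ ∫ y in B, |f z - f y| ∂volume := by
            simpa [Real.norm_eq_abs] using
              norm_integral_le_integral_norm (μ := volume.restrict B) (fun y => f z - f y)
        _ ≤ ∫ y in B, |f z - f y| ∂volume := le_rfl
    calc ENNReal.ofReal |f z - c|
        ≤ ENNReal.ofReal ((V.toReal)⁻¹ * ∫ y in B, |f z - f y| ∂volume) :=
          ENNReal.ofReal_le_ofReal hR
      _ = V⁻¹ * ∫⁻ y in B, ENNReal.ofReal |f z - f y| ∂volume := by
          rw [ENNReal.ofReal_mul (by positivity),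
            ofReal_integral_eq_lintegral_ofReal hsub.abs
              (Filter.Eventually.of_forall fun y => abs_nonneg _), hofV]
  -- Step C : Jensen (Hölder) on the ball
  have stepC : ∀ z : Euc d, ∫⁻ y in B, ENNReal.ofReal |f z - f y| ∂volume
      ≤ (∫⁻ y in B, ENNReal.ofReal |f z - f y| ^ p ∂volume) ^ (1 / p) * V ^ (1 - 1 / p) := by
    intro z
    have hgm : AEStronglyMeasurable (fun y => f z - f y) (volume.restrict B) :=
      aestronglyMeasurable_const.sub (hfLp.1.restrict)
    have h := eLpNorm'_le_eLpNorm'_mul_rpow_measure_univ (p := 1) (q := p)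
      one_pos hp hgm
    simp only [eLpNorm', ENNReal.rpow_one, one_div_one, Measure.restrict_apply_univ,
      Real.enorm_eq_ofReal_abs] at h
    simpa using h
  -- Step D : pointwise domination by the Gagliardo integrand
  have hGpow : ∀ z : Euc d, Gsp d s p f z ^ p
      = ∫⁻ y, ENNReal.ofReal (|f z - f y| ^ p / dist z y ^ e) ∂volume := by
    intro z
    rw [hedef, Gsp, ← ENNReal.rpow_mul, one_div, inv_mul_cancel₀ hp0, ENNReal.rpow_one]
  have stepD : ∀ z ∈ B, ∫⁻ y in B, ENNReal.ofReal |f z - f y| ^ p ∂volume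
      ≤ ENNReal.ofReal ((2 * r) ^ e) * Gsp d s p f z ^ p := by
    intro z hz
    have hae : ∀ᵐ y ∂(volume.restrict B), ENNReal.ofReal |f z - f y| ^ p
        ≤ ENNReal.ofReal ((2 * r) ^ e) * ENNReal.ofReal (|f z - f y| ^ p / dist z y ^ e) := by
      have hzne : ∀ᵐ y ∂(volume.restrict B), y ≠ z := by
        have h0 : volume ({z} : Set (Euc d)) = 0 := measure_singleton z
        refine ae_restrict_of_ae ?_
        rw [ae_iff]
        simpa [not_not, Set.setOf_eq_eq_singleton] using h0
      filter_upwards [ae_restrict_mem hmeasB, hzne] with y hy hyz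
      have hdist0 : 0 < dist z y := dist_pos.2 fun h => hyz h.symm
      have hdist2r : dist z y ≤ 2 * r := by
        have h1 : dist z x ≤ r := mem_closedBall.1 hz
        have h2 : dist x y ≤ r := by
          have := mem_closedBall.1 hy; rwa [dist_comm]
        calc dist z y ≤ dist z x + dist x y := dist_triangle z x y
          _ ≤ 2 * r := by linarith
      rw [ENNReal.ofReal_rpow_of_nonneg (abs_nonneg _) hp_pos.le, ← ENNReal.ofReal_mul (by positivity)]
      apply ENNReal.ofReal_le_ofReal
      have hde : (0:ℝ) < dist z y ^ e := Real.rpow_pos_of_pos hdist0 e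
      have h1 : dist z y ^ e ≤ (2 * r) ^ e :=
        Real.rpow_le_rpow dist_nonneg hdist2r he_pos.le
      calc |f z - f y| ^ p = dist z y ^ e * (|f z - f y| ^ p / dist z y ^ e) := by
            rw [mul_div_cancel₀ _ hde.ne']
        _ ≤ (2 * r) ^ e * (|f z - f y| ^ p / dist z y ^ e) := by
            apply mul_le_mul_of_nonneg_right h1
            positivity
    calc ∫⁻ y in B, ENNReal.ofReal |f z - f y| ^ p ∂volume
        ≤ ∫⁻ y in B, ENNReal.ofReal ((2 * r) ^ e)
            * ENNReal.ofReal (|f z - f y| ^ p / dist z y ^ e) ∂volume := lintegral_mono_ae hae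
      _ = ENNReal.ofReal ((2 * r) ^ e)
            * ∫⁻ y in B, ENNReal.ofReal (|f z - f y| ^ p / dist z y ^ e) ∂volume :=
          lintegral_const_mul' _ _ ENNReal.ofReal_ne_top
      _ ≤ ENNReal.ofReal ((2 * r) ^ e) * Gsp d s p f z ^ p := by
          rw [hGpow z]
          exact mul_le_mul_right (setLIntegral_le_lintegral _ _) _
  -- the constant
  set K : ℝ≥0∞ := ENNReal.ofReal ((2 * r) ^ e) ^ (1 / p) * V ^ (-(1 / p)) with hKdef
  -- combine B, C, D
  have hcomb : ∀ᵐ z ∂(volume.restrict B),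
      ENNReal.ofReal |f z - c| ≤ K * Gsp d s p f z := by
    filter_upwards [ae_restrict_mem hmeasB] with z hz
    refine (stepB z).trans ?_
    have h1 : ∫⁻ y in B, ENNReal.ofReal |f z - f y| ∂volume
        ≤ (ENNReal.ofReal ((2 * r) ^ e) * Gsp d s p f z ^ p) ^ (1 / p) * V ^ (1 - 1 / p) := by
      refine (stepC z).trans ?_
      gcongr
      exact stepD z hz
    have h2 : (ENNReal.ofReal ((2 * r) ^ e) * Gsp d s p f z ^ p) ^ (1 / p)
        = ENNReal.ofReal ((2 * r) ^ e) ^ (1 / p) * Gsp d s p f z := by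
      rw [ENNReal.mul_rpow_of_nonneg _ _ (by positivity), ← ENNReal.rpow_mul,
        mul_one_div, div_self hp0, ENNReal.rpow_one]
    have h3 : V⁻¹ * V ^ (1 - 1 / p) = V ^ (-(1 / p)) := by
      rw [← ENNReal.rpow_neg_one, ← ENNReal.rpow_add _ _ hV0 hVtop]
      congr 1
      ring
    calc V⁻¹ * ∫⁻ y in B, ENNReal.ofReal |f z - f y| ∂volume
        ≤ V⁻¹ * ((ENNReal.ofReal ((2 * r) ^ e) * Gsp d s p f z ^ p) ^ (1 / p)
            * V ^ (1 - 1 / p)) := mul_le_mul_right h1 _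
      _ = K * Gsp d s p f z := by
          rw [h2, hKdef]
          rw [← h3]; ring
  have hKtop : K ≠ ∞ := by
    apply ENNReal.mul_ne_top
    · exact ENNReal.rpow_ne_top_of_nonneg (by positivity) ENNReal.ofReal_ne_top
    · have hne : V ^ (1 / p : ℝ) ≠ 0 := by
        simp [ENNReal.rpow_eq_zero_iff, hV0, hVtop]
      rw [ENNReal.rpow_neg]
      exact ENNReal.inv_ne_top.2 hne
  -- main chain
  have hmain : ENNReal.ofReal (⨍ z in B, |f z - c| ∂volume)
      ≤ K * ((volume.withDensity (Gsp d s p f)) B / V) := by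
    rw [stepA]
    calc V⁻¹ * ∫⁻ z in B, ENNReal.ofReal |f z - c| ∂volume
        ≤ V⁻¹ * ∫⁻ z in B, K * Gsp d s p f z ∂volume :=
          mul_le_mul_right (lintegral_mono_ae hcomb) _
      _ = V⁻¹ * (K * ∫⁻ z in B, Gsp d s p f z ∂volume) := by
          rw [lintegral_const_mul' _ _ hKtop]
      _ = K * ((volume.withDensity (Gsp d s p f)) B / V) := by
          rw [withDensity_apply _ hmeasB, div_eq_mul_inv]; ring
  -- identify the constant
  have hKC : K = ENNReal.ofReal
      ((2 : ℝ) ^ (((d : ℝ) + s * p) / p)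
        * (Real.Gamma ((d : ℝ) / 2 + 1) / Real.pi ^ ((d : ℝ) / 2)) ^ (1 / p) * r ^ s) := by
    set G : ℝ := Real.Gamma ((d : ℝ) / 2 + 1) with hGdef
    have hG : 0 < G := Real.Gamma_pos_of_pos (by positivity)
    set v : ℝ := r ^ d * (Real.sqrt Real.pi ^ d / G) with hvdef
    have hv : 0 < v := by
      have := Real.sqrt_pos.2 Real.pi_pos
      positivity
    have hVv : V = ENNReal.ofReal v := by
      rw [hVdef, hBdef, EuclideanSpace.volume_closedBall, Fintype.card_fin,
        ← ENNReal.ofReal_pow hr.le, ← ENNReal.ofReal_mul (by positivity)]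
    have hsqrtpi : Real.sqrt Real.pi ^ d = Real.pi ^ ((d : ℝ) / 2) := by
      rw [Real.sqrt_eq_rpow, ← Real.rpow_natCast (Real.pi ^ ((1:ℝ)/2)) d,
        ← Real.rpow_mul Real.pi_pos.le]
      norm_num
      ring_nf
    rw [hKdef, hVv, ENNReal.ofReal_rpow_of_pos (by positivity),
      ENNReal.ofReal_rpow_of_pos hv, ← ENNReal.ofReal_mul (by positivity)]
    congr 1
    have h2r : ((2 * r) ^ e) ^ (1 / p) = 2 ^ (e / p) * r ^ (e / p) := by
      rw [← Real.rpow_mul (by positivity), mul_one_div, Real.mul_rpow (by norm_num) hr.le]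
    have hrd : ((r : ℝ) ^ d) ^ (-(1 / p)) = r ^ (-((d : ℝ) / p)) := by
      rw [← Real.rpow_natCast r d, ← Real.rpow_mul hr.le]
      ring_nf
    have hq : (Real.sqrt Real.pi ^ d / G) ^ (-(1 / p))
        = (G / Real.pi ^ ((d : ℝ) / 2)) ^ (1 / p) := by
      rw [hsqrtpi, Real.rpow_neg (by positivity), ← Real.inv_rpow (by positivity), inv_div]
    have hv' : v ^ (-(1 / p))
        = r ^ (-((d : ℝ) / p)) * (G / Real.pi ^ ((d : ℝ) / 2)) ^ (1 / p) := by
      rw [hvdef, Real.mul_rpow (by positivity) (by positivity), hrd, hq]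
    have hrs : r ^ (e / p) * r ^ (-((d : ℝ) / p)) = r ^ s := by
      rw [← Real.rpow_add hr]
      congr 1
      rw [hedef]
      field_simp
      ring
    rw [h2r, hv']
    calc 2 ^ (e / p) * r ^ (e / p)
          * (r ^ (-((d : ℝ) / p)) * (G / Real.pi ^ ((d : ℝ) / 2)) ^ (1 / p))
        = 2 ^ (e / p) * (G / Real.pi ^ ((d : ℝ) / 2)) ^ (1 / p)
          * (r ^ (e / p) * r ^ (-((d : ℝ) / p))) := by ring
      _ = 2 ^ (((d : ℝ) + s * p) / p)
          * (G / Real.pi ^ ((d : ℝ) / 2)) ^ (1 / p) * r ^ s := by rw [hrs, hedef]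
  -- finish
  have hmaxi : (volume.withDensity (Gsp d s p f)) B / V
      ≤ maximalR r (volume.withDensity (Gsp d s p f)) x := by
    rw [maximalR]
    exact le_iSup_of_le r (le_iSup_of_le ⟨hr, le_rfl⟩ le_rfl)
  exact hmain.trans (by rw [← hKC]; exact mul_le_mul_right hmaxi _)
end
end

section
/- Let s ∈ (0,1), p ∈ [1,∞), and let X, X̂ be ℝ^d-valued random variables with bounded densities p_X, p_X̂. Then for every essentially bounded f ∈ W^{s,p}(ℝ^d) and every q ∈ (0,∞), E[|f(X) − f(X̂)|^q] ≤ C_{W^{s,p}} · (E[|X − X̂|^{qs}])^{p/(q+p)}, where C_{W^{s,p}} = (2K₀(s,p))^q + (2‖f‖_∞)^q A₁(‖p_X‖_∞ + ‖p_X̂‖_∞) ‖(G_{s,p}f)^p‖_{L¹(ℝ^d)}. -/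
open MeasureTheory Metric Filter Set
open scoped ENNReal Topology

noncomputable section

lemma gsp_congr {d : ℕ} {s p : ℝ} {f g : Euc d → ℝ} (h : f =ᵐ[(volume : Measure (Euc d))] g) :
    Gsp d s p f =ᵐ[(volume : Measure (Euc d))] Gsp d s p g := by
  filter_upwards [h] with x hx
  unfold Gsp
  congr 1
  apply lintegral_congr_ae
  filter_upwards [h] with y hy
  rw [hx, hy]

lemma gsp_meas {d : ℕ} {s p : ℝ} {f : Euc d → ℝ} (hf : Measurable f) :
    Measurable (Gsp d s p f) := by
  apply Measurable.pow _ measurable_const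
  apply Measurable.lintegral_prod_right (f := fun x y => ENNReal.ofReal (|f x - f y| ^ p / dist x y ^ ((d : ℝ) + s * p)))
  apply Measurable.ennreal_ofReal
  apply Measurable.div
  · exact ((hf.comp measurable_fst).sub (hf.comp measurable_snd)).abs.pow measurable_const
  · exact measurable_dist.pow measurable_const

lemma gsp_aemeas {d : ℕ} {s p : ℝ} {f : Euc d → ℝ} (hf : AEMeasurable f (volume : Measure (Euc d))) :
    AEMeasurable (Gsp d s p f) (volume : Measure (Euc d)) :=
  ⟨Gsp d s p hf.mk, gsp_meas hf.measurable_mk, gsp_congr hf.ae_eq_mk⟩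


lemma jensen_max {d : ℕ} {p : ℝ} (hp : 1 ≤ p) {G : Euc d → ℝ≥0∞}
    (hG : AEMeasurable G (volume : Measure (Euc d))) (R : ℝ) (x : Euc d) :
    maximalR R (volume.withDensity G) x
      ≤ maximal (volume.withDensity (fun z => G z ^ p)) x ^ (1 / p) := by
  rw [maximalR]
  refine iSup₂_le fun r hr => ?_
  have hvB0 : volume (closedBall x r) ≠ 0 := (measure_closedBall_pos volume x hr.1).ne'
  have hvBt : volume (closedBall x r) ≠ ⊤ := measure_closedBall_lt_top.ne
  have hle : (volume.withDensity (fun z => G z ^ p)) (closedBall x r) / volume (closedBall x r)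
      ≤ maximal (volume.withDensity (fun z => G z ^ p)) x := by
    rw [maximal]
    exact le_iSup₂ (f := fun s _ => (volume.withDensity (fun z => G z ^ p)) (closedBall x s)
      / volume (closedBall x s)) r hr.1
  have key : (volume.withDensity G) (closedBall x r) / volume (closedBall x r)
      ≤ ((volume.withDensity (fun z => G z ^ p)) (closedBall x r) / volume (closedBall x r)) ^ (1 / p) := by
    rcases eq_or_lt_of_le hp with hp1 | hp1
    · have hGp : (fun z => G z ^ p) = G := by
        funext z; rw [← hp1, ENNReal.rpow_one]
      rw [hGp, ← hp1]
      simp [ENNReal.rpow_one]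
    · set B := closedBall x r with hB
      have hBm : MeasurableSet B := measurableSet_closedBall
      set vB := volume B with hvB
      have hconj : p.HolderConjugate (p / (p - 1)) := Real.HolderConjugate.conjExponent hp1
      have hold : (volume.withDensity G) B ≤ ((volume.withDensity (fun z => G z ^ p)) B) ^ (1/p) * vB ^ (1 - 1/p) := by
        rw [withDensity_apply _ hBm, withDensity_apply _ hBm]
        have h1 : ∫⁻ y in B, G y ∂volume = ∫⁻ y, G y * 1 ∂(volume.restrict B) := by
          simp
        rw [h1]
        calc ∫⁻ y, G y * 1 ∂(volume.restrict B)
            ≤ (∫⁻ y, G y ^ p ∂(volume.restrict B)) ^ (1/p)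
              * (∫⁻ y, (1:ℝ≥0∞) ^ (p/(p-1)) ∂(volume.restrict B)) ^ (1/(p/(p-1))) :=
              ENNReal.lintegral_mul_le_Lp_mul_Lq _ hconj hG.restrict aemeasurable_const
          _ = (∫⁻ y in B, G y ^ p ∂volume) ^ (1/p) * vB ^ (1 - 1/p) := by
              simp only [ENNReal.one_rpow, lintegral_one, Measure.restrict_apply MeasurableSet.univ,
                Set.univ_inter]
              rw [one_div p, hconj.one_sub_inv, one_div]
      -- conclude
      have h1p : (0:ℝ) ≤ 1/p := by positivity
      rw [ENNReal.div_rpow_of_nonneg _ _ h1p, ENNReal.div_le_iff hvB0 hvBt]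
      have hvsplit : (vB ^ (1/p))⁻¹ * vB = vB ^ (1 - 1/p) := by
        have : vB = vB ^ (1/p) * vB ^ (1 - 1/p) := by
          rw [← ENNReal.rpow_add _ _ hvB0 hvBt]; norm_num
        rw [mul_comm]
        nth_rewrite 1 [this]
        rw [mul_comm (vB ^ (1/p)) (vB ^ (1 - 1/p)), mul_assoc, ENNReal.mul_inv_cancel, mul_one]
        · simp [ENNReal.rpow_eq_zero_iff, hvB0, hvBt]
        · exact ENNReal.rpow_ne_top_of_nonneg h1p hvBt
      rw [div_eq_mul_inv, mul_assoc, hvsplit]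
      exact hold
  calc (volume.withDensity G) (closedBall x r) / volume (closedBall x r)
      ≤ ((volume.withDensity (fun z => G z ^ p)) (closedBall x r) / volume (closedBall x r)) ^ (1 / p) := key
    _ ≤ maximal (volume.withDensity (fun z => G z ^ p)) x ^ (1 / p) :=
        ENNReal.rpow_le_rpow hle (by positivity)


lemma chain {d : ℕ} {s p K₀ : ℝ} (hs0 : 0 < s) (hp : 1 ≤ p) (hK₀ : 0 < K₀) {f : Euc d → ℝ}
    (hG : AEMeasurable (Gsp d s p f) (volume : Measure (Euc d)))
    (hpt : ∀ᵐ x ∂(volume : Measure (Euc d)), ∀ᵐ y ∂(volume : Measure (Euc d)),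
      ENNReal.ofReal |f x - f y|
        ≤ ENNReal.ofReal (K₀ * dist x y ^ s)
          * (maximalR (2 * dist x y) (volume.withDensity (Gsp d s p f)) x
            + maximalR (2 * dist x y) (volume.withDensity (Gsp d s p f)) y))
    (lam : ℝ≥0∞) (hlam : lam ≠ ∞) :
    ∃ T : Set (Euc d), MeasurableSet T ∧
      volume T ≤ volume {x | lam < maximal (volume.withDensity (fun z => Gsp d s p f z ^ p)) x} ∧
      ∀ x ∉ T, ∀ x' ∉ T, ENNReal.ofReal |f x - f x'|
        ≤ 2 * ENNReal.ofReal K₀ * lam ^ (1/p) * edist x x' ^ s := by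
  classical
  set G := Gsp d s p f with hGdef
  set νp := volume.withDensity (fun z => G z ^ p) with hνp
  set Q : Euc d → Euc d → Prop := fun x y =>
    ENNReal.ofReal |f x - f y|
      ≤ ENNReal.ofReal (K₀ * dist x y ^ s)
        * (maximalR (2 * dist x y) (volume.withDensity G) x
          + maximalR (2 * dist x y) (volume.withDensity G) y) with hQ
  set S := {x : Euc d | lam < maximal νp x} with hS
  set C : ℝ≥0∞ := 2 * ENNReal.ofReal K₀ * lam ^ (1/p) with hC
  have hCne : C ≠ ∞ := by
    refine ENNReal.mul_ne_top (ENNReal.mul_ne_top (by simp) (by simp)) ?_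
    exact ENNReal.rpow_ne_top_of_nonneg (by positivity) hlam
  -- the exceptional sets
  set N₀ := toMeasurable volume {x : Euc d | ¬ ∀ᵐ y ∂(volume : Measure (Euc d)), Q x y} with hN₀
  have hN₀0 : volume N₀ = 0 := by
    rw [hN₀, measure_toMeasurable]
    exact hpt
  set A : Set (Euc d) := Sᶜ \ N₀ with hA
  obtain ⟨t, htsub, htm, ht0⟩ := exists_measurable_superset_of_null
    (ae_iff.mp (Besicovitch.ae_tendsto_measure_inter_div (volume : Measure (Euc d)) A))
  have hZ0 : volume (t ∩ A) = 0 := by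
    rw [← Measure.restrict_apply htm]; exact ht0
  set Z := toMeasurable volume (t ∩ A) with hZdef
  have hZ0' : volume Z = 0 := by rw [hZdef, measure_toMeasurable]; exact hZ0
  refine ⟨toMeasurable volume S ∪ N₀ ∪ Z,
    ((measurableSet_toMeasurable _ _).union (measurableSet_toMeasurable _ _)).union
      (measurableSet_toMeasurable _ _), ?_, ?_⟩
  · calc volume (toMeasurable volume S ∪ N₀ ∪ Z)
        ≤ volume (toMeasurable volume S) + volume N₀ + volume Z := by
          exact le_trans (measure_union_le _ _) (add_le_add_left (measure_union_le _ _) _)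
      _ = volume S := by rw [hN₀0, hZ0', measure_toMeasurable, add_zero, add_zero]
  -- the key pointwise estimate
  intro x hx x' hx'
  -- basic facts about x and x'
  have hfacts : ∀ z : Euc d, z ∉ toMeasurable volume S ∪ N₀ ∪ Z →
      maximal νp z ≤ lam ∧ z ∈ A ∧ (∀ᵐ y ∂(volume : Measure (Euc d)), Q z y) ∧
        Tendsto (fun r => volume (A ∩ closedBall z r) / volume (closedBall z r)) (𝓝[>] 0) (𝓝 1) := by
    intro z hz
    simp only [Set.mem_union, not_or] at hz
    obtain ⟨⟨hz1, hz2⟩, hz3⟩ := hz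
    have hzS : z ∉ S := fun h => hz1 (subset_toMeasurable _ _ h)
    have hzN : z ∉ N₀ := hz2
    have hzA : z ∈ A := ⟨hzS, hzN⟩
    have hzQ : ∀ᵐ y ∂(volume : Measure (Euc d)), Q z y := by
      by_contra h
      exact hzN (subset_toMeasurable _ _ h)
    have hzT : Tendsto (fun r => volume (A ∩ closedBall z r) / volume (closedBall z r)) (𝓝[>] 0) (𝓝 1) := by
      by_contra h
      exact hz3 (subset_toMeasurable _ _ ⟨htsub h, hzA⟩)
    exact ⟨not_lt.mp hzS, hzA, hzQ, hzT⟩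
  obtain ⟨hxM, hxA, hxQ, _⟩ := hfacts x hx
  obtain ⟨hx'M, hx'A, hx'Q, hx'T⟩ := hfacts x' hx'
  -- bound for admissible pairs
  have hbound : ∀ z w : Euc d, maximal νp z ≤ lam → maximal νp w ≤ lam → Q z w →
      ENNReal.ofReal |f z - f w| ≤ C * ENNReal.ofReal (dist z w ^ s) := by
    intro z w hz hw hq
    have hmz : maximalR (2 * dist z w) (volume.withDensity G) z ≤ lam ^ (1/p) :=
      (jensen_max hp hG _ z).trans (ENNReal.rpow_le_rpow hz (by positivity))
    have hmw : maximalR (2 * dist z w) (volume.withDensity G) w ≤ lam ^ (1/p) :=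
      (jensen_max hp hG _ w).trans (ENNReal.rpow_le_rpow hw (by positivity))
    calc ENNReal.ofReal |f z - f w|
        ≤ ENNReal.ofReal (K₀ * dist z w ^ s)
          * (maximalR (2 * dist z w) (volume.withDensity G) z
            + maximalR (2 * dist z w) (volume.withDensity G) w) := hq
      _ ≤ ENNReal.ofReal (K₀ * dist z w ^ s) * (lam ^ (1/p) + lam ^ (1/p)) :=
          mul_le_mul_right (add_le_add hmz hmw) _
      _ = C * ENNReal.ofReal (dist z w ^ s) := by
          rw [ENNReal.ofReal_mul hK₀.le, ← two_mul, hC]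
          ring
  -- reduce to an ε-approximation
  have hmain : ∀ ε : ℝ, 0 < ε → ENNReal.ofReal |f x - f x'|
      ≤ C * ENNReal.ofReal ((dist x x' + ε) ^ s + ε ^ s) := by
    intro ε hε
    -- find a small radius with positive density
    have h12 : (1/2 : ℝ≥0∞) < 1 := by norm_num
    have hev : ∀ᶠ r in 𝓝[>] (0:ℝ),
        (1/2 : ℝ≥0∞) < volume (A ∩ closedBall x' r) / volume (closedBall x' r) :=
      hx'T.eventually (eventually_gt_nhds h12)
    have hmem : ∀ᶠ r in 𝓝[>] (0:ℝ), r ∈ Set.Ioc (0:ℝ) ε :=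
      Ioc_mem_nhdsGT_of_mem ⟨le_refl _, hε⟩
    obtain ⟨r, hr1, hr2⟩ := (hev.and hmem).exists
    have hpos : volume (A ∩ closedBall x' r) ≠ 0 := by
      intro h0
      rw [h0, ENNReal.zero_div] at hr1
      exact (not_lt.mpr zero_le) hr1
    -- exceptional set for picking y
    set U := toMeasurable volume ({y : Euc d | ¬ Q x y} ∪ {y : Euc d | ¬ Q x' y}) with hU
    have hU0 : volume U = 0 := by
      rw [hU, measure_toMeasurable]
      refine measure_union_null ?_ ?_
      · exact ae_iff.mp hxQ
      · exact ae_iff.mp hx'Q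
    have hex : ∃ y, y ∈ A ∩ closedBall x' r ∧ y ∉ U := by
      by_contra h
      push_neg at h
      exact hpos (measure_mono_null (fun y hy => h y hy) hU0)
    obtain ⟨y, ⟨hyA, hyB⟩, hyU⟩ := hex
    have hyQx : Q x y := by
      by_contra h
      exact hyU (subset_toMeasurable _ _ (Or.inl h))
    have hyQx' : Q x' y := by
      by_contra h
      exact hyU (subset_toMeasurable _ _ (Or.inr h))
    have hyM : maximal νp y ≤ lam := not_lt.mp hyA.1
    have h1 : ENNReal.ofReal |f x - f y| ≤ C * ENNReal.ofReal (dist x y ^ s) :=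
      hbound x y hxM hyM hyQx
    have h2 : ENNReal.ofReal |f x' - f y| ≤ C * ENNReal.ofReal (dist x' y ^ s) :=
      hbound x' y hx'M hyM hyQx'
    have hdy : dist x' y ≤ ε := le_trans (mem_closedBall'.mp hyB) hr2.2
    have hdxy : dist x y ≤ dist x x' + ε :=
      le_trans (dist_triangle x x' y) (by linarith)
    calc ENNReal.ofReal |f x - f x'|
        ≤ ENNReal.ofReal (|f x - f y| + |f x' - f y|) := by
          apply ENNReal.ofReal_le_ofReal
          rw [abs_sub_comm (f x') (f y)]
          exact abs_sub_le _ _ _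
      _ = ENNReal.ofReal |f x - f y| + ENNReal.ofReal |f x' - f y| :=
          ENNReal.ofReal_add (abs_nonneg _) (abs_nonneg _)
      _ ≤ C * ENNReal.ofReal (dist x y ^ s) + C * ENNReal.ofReal (dist x' y ^ s) :=
          add_le_add h1 h2
      _ = C * (ENNReal.ofReal (dist x y ^ s) + ENNReal.ofReal (dist x' y ^ s)) := by ring
      _ = C * ENNReal.ofReal (dist x y ^ s + dist x' y ^ s) := by
          rw [ENNReal.ofReal_add (by positivity) (by positivity)]
      _ ≤ C * ENNReal.ofReal ((dist x x' + ε) ^ s + ε ^ s) := by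
          apply mul_le_mul_right
          apply ENNReal.ofReal_le_ofReal
          have e1 : dist x y ^ s ≤ (dist x x' + ε) ^ s :=
            Real.rpow_le_rpow dist_nonneg hdxy hs0.le
          have e2 : dist x' y ^ s ≤ ε ^ s :=
            Real.rpow_le_rpow dist_nonneg hdy hs0.le
          linarith
  -- take the limit ε → 0⁺
  have hlim : Tendsto (fun ε : ℝ => C * ENNReal.ofReal ((dist x x' + ε) ^ s + ε ^ s))
      (𝓝[>] (0:ℝ)) (𝓝 (C * ENNReal.ofReal ((dist x x' + 0) ^ s + 0 ^ s))) := by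
    apply ENNReal.Tendsto.const_mul
    · apply (ENNReal.continuous_ofReal.tendsto _).comp
      apply Filter.Tendsto.mono_left _ nhdsWithin_le_nhds
      apply Filter.Tendsto.add
      · exact (Real.continuousAt_rpow_const _ _ (Or.inr hs0.le)).comp
          (by exact (continuous_const.add continuous_id).continuousAt)
      · exact Real.continuousAt_rpow_const _ _ (Or.inr hs0.le)
    · exact Or.inr hCne
  have : ENNReal.ofReal |f x - f x'| ≤ C * ENNReal.ofReal ((dist x x' + 0) ^ s + 0 ^ s) := by
    apply ge_of_tendsto hlim
    filter_upwards [self_mem_nhdsWithin] with ε hε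
    exact hmain ε hε
  calc ENNReal.ofReal |f x - f x'|
      ≤ C * ENNReal.ofReal ((dist x x' + 0) ^ s + 0 ^ s) := this
    _ = C * edist x x' ^ s := by
        rw [add_zero, Real.zero_rpow hs0.ne', add_zero, edist_dist,
          ← ENNReal.ofReal_rpow_of_nonneg dist_nonneg hs0.le]


/-- Theorem 2.25 (case of bounded densities, `r = ∞`): Avikainen-type estimate for
essentially bounded fractional Sobolev functions `f ∈ W^{s,p}(ℝ^d)`:
`E[|f(X) − f(X̂)|^q] ≤ C (E[|X − X̂|^{qs}])^{p/(q+p)}` with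
`C = (2K₀(s,p))^q + (2‖f‖_∞)^q A₁ (‖p_X‖_∞ + ‖p_X̂‖_∞) ‖(G_{s,p}f)^p‖_{L¹}`. -/
theorem stmt_12 {d : ℕ} {Ω : Type*} [MeasurableSpace Ω] (P : Measure Ω) [IsProbabilityMeasure P]
    (s p q : ℝ) (hs0 : 0 < s) (hs1 : s < 1) (hp : 1 ≤ p) (hq : 0 < q)
    (X Xh : Ω → Euc d) (hX : Measurable X) (hXh : Measurable Xh)
    (pX pXh : Euc d → ℝ≥0∞)
    (hdX : P.map X = volume.withDensity pX)
    (hdXh : P.map Xh = volume.withDensity pXh)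
    (hbX : essSup pX volume ≠ ∞) (hbXh : essSup pXh volume ≠ ∞)
    (f : Euc d → ℝ) (hfLp : MemLp f (ENNReal.ofReal p) volume)
    (hfW : ∫⁻ x, Gsp d s p f x ^ p ∂volume ≠ ∞)
    (hfb : eLpNorm f ⊤ volume ≠ ∞)
    (K₀ A₁ : ℝ) (hK₀ : 0 < K₀) (hA₁ : 0 < A₁)
    (hpt : ∀ᵐ x ∂(volume : Measure (Euc d)), ∀ᵐ y ∂(volume : Measure (Euc d)),
      ENNReal.ofReal |f x - f y|
        ≤ ENNReal.ofReal (K₀ * dist x y ^ s)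
          * (maximalR (2 * dist x y) (volume.withDensity (Gsp d s p f)) x
            + maximalR (2 * dist x y) (volume.withDensity (Gsp d s p f)) y))
    (hweak : ∀ lam : ℝ≥0∞, lam ≠ 0 →
      volume {x : Euc d | lam < maximal (volume.withDensity fun z => Gsp d s p f z ^ p) x}
        ≤ ENNReal.ofReal A₁ * (∫⁻ x, Gsp d s p f x ^ p ∂volume) / lam) :
    ∫⁻ ω, ENNReal.ofReal |f (X ω) - f (Xh ω)| ^ q ∂P
      ≤ (ENNReal.ofReal ((2 * K₀) ^ q)
          + ENNReal.ofReal ((2 * (eLpNorm f ⊤ volume).toReal) ^ q) * ENNReal.ofReal A₁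
            * (essSup pX volume + essSup pXh volume)
            * ∫⁻ x, Gsp d s p f x ^ p ∂volume)
        * (∫⁻ ω, edist (X ω) (Xh ω) ^ (q * s) ∂P) ^ (p / (q + p)) := by
  have hp0 : (0:ℝ) < p := lt_of_lt_of_le one_pos hp
  have hqp : (0:ℝ) < q + p := by linarith
  set I := ∫⁻ x, Gsp d s p f x ^ p ∂volume with hI
  set E := ∫⁻ ω, edist (X ω) (Xh ω) ^ (q * s) ∂P with hE
  set Mb := (eLpNorm f ⊤ volume).toReal with hM
  set c₁ := ENNReal.ofReal ((2 * K₀) ^ q) with hc₁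
  set c₂ := ENNReal.ofReal ((2 * Mb) ^ q) with hc₂
  have hmeasE : Measurable fun ω => edist (X ω) (Xh ω) ^ (q * s) :=
    (hX.edist hXh).pow measurable_const
  -- trivial case E = 0
  by_cases hE0 : E = 0
  · have h0 : (fun ω => edist (X ω) (Xh ω) ^ (q * s)) =ᵐ[P] 0 :=
      (lintegral_eq_zero_iff hmeasE).mp hE0
    have hLHS : ∫⁻ ω, ENNReal.ofReal |f (X ω) - f (Xh ω)| ^ q ∂P = 0 := by
      rw [← lintegral_zero (μ := P)]
      apply lintegral_congr_ae
      filter_upwards [h0] with ω hω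
      have : edist (X ω) (Xh ω) = 0 := by
        have := ENNReal.rpow_eq_zero_iff.mp hω
        rcases this with ⟨h, _⟩ | ⟨_, hlt⟩
        · exact h
        · exact absurd hlt (not_lt.mpr (by positivity))
      have hxy : X ω = Xh ω := edist_eq_zero.mp this
      rw [hxy]
      simp [ENNReal.zero_rpow_of_pos hq]
    rw [hLHS]; exact zero_le
  -- trivial case E = ∞
  by_cases hEt : E = ∞
  · have : E ^ (p / (q + p)) = ∞ := by
      rw [hEt]
      exact ENNReal.top_rpow_of_pos (by positivity)
    rw [this, ENNReal.mul_top]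
    · exact le_top
    · intro h
      have : c₁ = 0 := by
        refine le_antisymm ?_ zero_le
        rw [← h]; exact le_add_right (le_refl _)
      rw [hc₁, ENNReal.ofReal_eq_zero] at this
      nlinarith [Real.rpow_pos_of_pos (by linarith : (0:ℝ) < 2 * K₀) q]
  -- main case
  have hEpow0 : E ^ (p / (q + p)) ≠ 0 := by
    simp [ENNReal.rpow_eq_zero_iff, hE0, hEt]
  have hEpowt : E ^ (p / (q + p)) ≠ ∞ := by
    simp [ENNReal.rpow_eq_top_iff, hE0, hEt]
  set lam := (E ^ (p / (q + p)))⁻¹ with hlamdef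
  have hlam0 : lam ≠ 0 := by simp [hlamdef, hEpowt]
  have hlamt : lam ≠ ∞ := by simp [hlamdef, hEpow0]
  have hGae : AEMeasurable (Gsp d s p f) (volume : Measure (Euc d)) :=
    gsp_aemeas hfLp.1.aemeasurable
  obtain ⟨T, hTm, hTvol, hTkey⟩ := chain hs0 hp hK₀ hGae hpt lam hlamt
  have hTvol' : volume T ≤ ENNReal.ofReal A₁ * I / lam := hTvol.trans (hweak lam hlam0)
  -- essential bound for f
  have hfM : ∀ᵐ x ∂(volume : Measure (Euc d)), |f x| ≤ Mb := by
    have h1 : ∀ᵐ x ∂(volume : Measure (Euc d)),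
        (‖f x‖₊ : ℝ≥0∞) ≤ eLpNorm f ⊤ volume := by
      rw [eLpNorm_exponent_top]
      exact ae_le_eLpNormEssSup
    filter_upwards [h1] with x hx
    have := ENNReal.toReal_mono hfb hx
    simpa [Real.norm_eq_abs, hM, eLpNorm_exponent_top] using this
  set W := toMeasurable volume {x : Euc d | ¬ |f x| ≤ Mb} with hW
  have hWm : MeasurableSet W := measurableSet_toMeasurable _ _
  have hW0 : volume W = 0 := by
    rw [hW, measure_toMeasurable]
    exact ae_iff.mp hfM
  have haeW : ∀ (g : Ω → Euc d), Measurable g → ∀ (pg : Euc d → ℝ≥0∞),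
      P.map g = volume.withDensity pg → ∀ᵐ ω ∂P, g ω ∉ W := by
    intro g hg pg hdg
    have : P (g ⁻¹' W) = 0 := by
      rw [← Measure.map_apply hg hWm, hdg, withDensity_apply _ hWm,
        setLIntegral_measure_zero _ _ hW0]
    exact ae_iff.mpr (by simpa using (show P {a | g a ∈ W} = 0 from this))
  -- pointwise bound
  have hpw : ∀ᵐ ω ∂P, ENNReal.ofReal |f (X ω) - f (Xh ω)| ^ q
      ≤ c₁ * lam ^ (q / p) * edist (X ω) (Xh ω) ^ (q * s)
        + Set.indicator (X ⁻¹' T ∪ Xh ⁻¹' T) (fun _ => c₂) ω := by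
    filter_upwards [haeW X hX pX hdX, haeW Xh hXh pXh hdXh] with ω hW1 hW2
    by_cases hT : ω ∈ X ⁻¹' T ∪ Xh ⁻¹' T
    · rw [Set.indicator_of_mem hT]
      have hb1 : |f (X ω)| ≤ Mb := by
        by_contra h
        exact hW1 (subset_toMeasurable _ _ h)
      have hb2 : |f (Xh ω)| ≤ Mb := by
        by_contra h
        exact hW2 (subset_toMeasurable _ _ h)
      have habs : |f (X ω) - f (Xh ω)| ≤ 2 * Mb := by
        calc |f (X ω) - f (Xh ω)| ≤ |f (X ω)| + |f (Xh ω)| := abs_sub _ _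
          _ ≤ 2 * Mb := by linarith
      have : ENNReal.ofReal |f (X ω) - f (Xh ω)| ^ q ≤ ENNReal.ofReal (2 * Mb) ^ q :=
        ENNReal.rpow_le_rpow (ENNReal.ofReal_le_ofReal habs) hq.le
      refine le_trans ?_ le_add_self
      rw [hc₂, ← ENNReal.ofReal_rpow_of_nonneg (by positivity) hq.le]
      exact this
    · simp only [Set.mem_union, not_or] at hT
      rw [Set.indicator_of_notMem (by simp [Set.mem_union, hT.1, hT.2]), add_zero]
      have key := hTkey (X ω) hT.1 (Xh ω) hT.2
      have step := ENNReal.rpow_le_rpow key hq.le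
      refine step.trans (le_of_eq ?_)
      rw [ENNReal.mul_rpow_of_nonneg _ _ hq.le, ENNReal.mul_rpow_of_nonneg _ _ hq.le,
        ENNReal.mul_rpow_of_nonneg _ _ hq.le]
      have e2 : (ENNReal.ofReal K₀) ^ q = ENNReal.ofReal (K₀ ^ q) :=
        ENNReal.ofReal_rpow_of_nonneg hK₀.le hq.le
      have e1 : (2:ℝ≥0∞) ^ q = ENNReal.ofReal (2 ^ q) := by
        rw [← ENNReal.ofReal_rpow_of_nonneg (by norm_num) hq.le]
        norm_num
      have e3 : (lam ^ (1/p)) ^ q = lam ^ (q / p) := by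
        rw [← ENNReal.rpow_mul]
        congr 1
        field_simp
      have e4 : (edist (X ω) (Xh ω) ^ s) ^ q = edist (X ω) (Xh ω) ^ (q * s) := by
        rw [← ENNReal.rpow_mul, mul_comm]
      rw [e1, e2, e3, e4, hc₁]
      rw [← ENNReal.ofReal_mul (by positivity), ← Real.mul_rpow (by norm_num) hK₀.le]
  -- integrate the pointwise bound
  have hUm : MeasurableSet (X ⁻¹' T ∪ Xh ⁻¹' T) := (hX hTm).union (hXh hTm)
  have hint : ∫⁻ ω, ENNReal.ofReal |f (X ω) - f (Xh ω)| ^ q ∂P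
      ≤ c₁ * lam ^ (q / p) * E + c₂ * P (X ⁻¹' T ∪ Xh ⁻¹' T) := by
    calc ∫⁻ ω, ENNReal.ofReal |f (X ω) - f (Xh ω)| ^ q ∂P
        ≤ ∫⁻ ω, (c₁ * lam ^ (q / p) * edist (X ω) (Xh ω) ^ (q * s)
            + Set.indicator (X ⁻¹' T ∪ Xh ⁻¹' T) (fun _ => c₂) ω) ∂P :=
          lintegral_mono_ae hpw
      _ = ∫⁻ ω, c₁ * lam ^ (q / p) * edist (X ω) (Xh ω) ^ (q * s) ∂P
          + ∫⁻ ω, Set.indicator (X ⁻¹' T ∪ Xh ⁻¹' T) (fun _ => c₂) ω ∂P :=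
          lintegral_add_left (measurable_const.mul hmeasE) _
      _ = c₁ * lam ^ (q / p) * E + c₂ * P (X ⁻¹' T ∪ Xh ⁻¹' T) := by
          rw [lintegral_const_mul _ hmeasE, lintegral_indicator_const hUm]
  -- bound the bad-event probability
  have hbad : P (X ⁻¹' T ∪ Xh ⁻¹' T)
      ≤ (essSup pX volume + essSup pXh volume) * (ENNReal.ofReal A₁ * I / lam) := by
    have hX1 : P (X ⁻¹' T) ≤ essSup pX volume * volume T := by
      rw [← Measure.map_apply hX hTm, hdX, withDensity_apply _ hTm]
      calc ∫⁻ x in T, pX x ∂volume ≤ ∫⁻ _x in T, essSup pX volume ∂volume :=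
            lintegral_mono_ae (ae_restrict_of_ae ae_le_essSup)
        _ = essSup pX volume * volume T := by
            rw [setLIntegral_const]
    have hX2 : P (Xh ⁻¹' T) ≤ essSup pXh volume * volume T := by
      rw [← Measure.map_apply hXh hTm, hdXh, withDensity_apply _ hTm]
      calc ∫⁻ x in T, pXh x ∂volume ≤ ∫⁻ _x in T, essSup pXh volume ∂volume :=
            lintegral_mono_ae (ae_restrict_of_ae ae_le_essSup)
        _ = essSup pXh volume * volume T := by
            rw [setLIntegral_const]
    calc P (X ⁻¹' T ∪ Xh ⁻¹' T) ≤ P (X ⁻¹' T) + P (Xh ⁻¹' T) := measure_union_le _ _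
      _ ≤ essSup pX volume * volume T + essSup pXh volume * volume T :=
          add_le_add hX1 hX2
      _ = (essSup pX volume + essSup pXh volume) * volume T := (add_mul _ _ _).symm
      _ ≤ (essSup pX volume + essSup pXh volume) * (ENNReal.ofReal A₁ * I / lam) :=
          mul_le_mul_right hTvol' _
  -- exponent algebra
  have hlaminv : lam⁻¹ = E ^ (p / (q + p)) := by rw [hlamdef, inv_inv]
  have hlampow : lam ^ (q / p) * E = E ^ (p / (q + p)) := by
    have h1 : lam = E ^ (-(p / (q + p))) := by
      rw [ENNReal.rpow_neg, hlamdef]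
    rw [h1, ← ENNReal.rpow_mul]
    have h2 : E = E ^ (1:ℝ) := (ENNReal.rpow_one E).symm
    nth_rewrite 2 [h2]
    rw [← ENNReal.rpow_add _ _ hE0 hEt]
    congr 1
    field_simp
    ring
  -- put everything together
  calc ∫⁻ ω, ENNReal.ofReal |f (X ω) - f (Xh ω)| ^ q ∂P
      ≤ c₁ * lam ^ (q / p) * E + c₂ * P (X ⁻¹' T ∪ Xh ⁻¹' T) := hint
    _ ≤ c₁ * lam ^ (q / p) * E
        + c₂ * ((essSup pX volume + essSup pXh volume) * (ENNReal.ofReal A₁ * I / lam)) :=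
        add_le_add_right (mul_le_mul_right hbad _) _
    _ = (c₁ + c₂ * ENNReal.ofReal A₁ * (essSup pX volume + essSup pXh volume) * I)
        * E ^ (p / (q + p)) := by
        rw [mul_assoc c₁, hlampow, div_eq_mul_inv (ENNReal.ofReal A₁ * I) lam, hlaminv]
        ring
end
end
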